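/- arXiv:2305.04607 — 4 statements merged into one kernel-verified Lean document; each statement's English description precedes it below -/
import Mathlib

section
/- Let (K,e) be a non-archimedean ordered exponential field whose exponential satisfies the growth axiom, and let v be the natural valuation on K. If x, y are positive infinite elements with v(x) < v(y), then v(e(x)) < v(e(y)). -/
/-- Let (K,e) be a non-archimedean ordered exponential field with e satisfying
the growth axiom. If x, y are positive infinite with v(x) < v(y)
(i.e. x > n·y for all n), then v(e(x)) < v(e(y)) (i.e. e(x) > n·e(y) for all n). -/
theorem stmt_9 {K : Type*} [Field K] [LinearOrder K] [IsStrictOrderedRing K] (e : K → K)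
    (e_pos : ∀ x : K, 0 < e x)
    (e_mono : StrictMono e)
    (e_add : ∀ x y : K, e (x + y) = e x * e y)
    (e_surj : ∀ y : K, 0 < y → ∃ x, e x = y)
    (e_GA : ∀ (n : ℕ) (a : K), (n : K) ^ 2 ≤ a → a ^ n < e a)
    (nonarch : ∃ z : K, ∀ n : ℕ, (n : K) < z)
    (x y : K) (hx : ∀ n : ℕ, (n : K) < x) (hy : ∀ n : ℕ, (n : K) < y)
    (hv : ∀ n : ℕ, (n : K) * y < x) :
    ∀ n : ℕ, (n : K) * e y < e x := by
  intro n
  have h2 : (2 : K) * y < x := by have := hv 2; push_cast at this; linarith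
  have hyx : y < x - y := by linarith
  have hn : (n : K) < x - y := lt_trans (hy n) hyx
  have h1 : ((1 : ℕ) : K) ^ 2 ≤ x - y := by
    have := hy 1; push_cast at this ⊢; linarith
  have hga := e_GA 1 (x - y) h1
  rw [pow_one] at hga
  have hne : (n : K) < e (x - y) := lt_trans hn hga
  have hEx : e x = e (x - y) * e y := by
    have := e_add (x - y) y
    simpa using this
  rw [hEx]
  exact mul_lt_mul_of_pos_right hne (e_pos y)
end

section
/- Let (K,e,T) be a non-archimedean ordered transexponential field. Then the induced residue map T̄ : K̄ → K̄^{>0}, defined by T̄(ā) = T(a)‾ for a in the valuation ring R_v, is a well-defined transexponential on the residue field K̄ compatible with the residue exponential ē; that is, (K̄, ē, T̄) is again an ordered transexponential field. -/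
/-- An ordered transexponential field structure on an ordered field `K`:
`e` is a (GAT₁)-exponential and `T` a compatible transexponential. -/
structure IsOTF {K : Type*} [Field K] [LinearOrder K] [IsStrictOrderedRing K] (e T : K → K) : Prop where
  e_pos : ∀ x : K, 0 < e x
  e_mono : StrictMono e
  e_add : ∀ x y : K, e (x + y) = e x * e y
  e_surj : ∀ y : K, 0 < y → ∃ x, e x = y
  e_GA : ∀ (n : ℕ) (a : K), (n : K) ^ 2 ≤ a → a ^ n < e a
  e_T1 : ∀ a : K, 0 < |a| → |a| ≤ 1 → |e a - (1 + a)| < a ^ 2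
  T_pos : ∀ x : K, 0 < T x
  T_mono : StrictMono T
  T_surj : ∀ y : K, 0 < y → ∃ x, T x = y
  T_eq_e : ∀ x : K, 0 ≤ x → x ≤ 1 → T x = e x
  T_succ : ∀ x : K, 0 < x → T (x + 1) = e (T x)
  T_neg : ∀ x : K, x < 0 → T x * T (-x) = 1

/-- `x` is finite (lies in the valuation ring `R_v` of the natural valuation). -/
def IsFinElt {K : Type*} [Field K] [LinearOrder K] [IsStrictOrderedRing K] (x : K) : Prop :=
  ∃ n : ℕ, |x| ≤ (n : K)

/-- `x` is infinitesimal (lies in the valuation ideal `I_v`). -/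
def IsInfml {K : Type*} [Field K] [LinearOrder K] [IsStrictOrderedRing K] (x : K) : Prop :=
  ∀ n : ℕ, 0 < n → |x| < ((n : K))⁻¹

section Aux
variable {K : Type*} [Field K] [LinearOrder K] [IsStrictOrderedRing K] {e T : K → K} (h : IsOTF e T)
include h

lemma e0 : e 0 = 1 := by
  have h1 := h.e_add 0 0
  have hp := h.e_pos 0
  rw [add_zero] at h1
  nlinarith

lemma e_mul_neg (x : K) : e x * e (-x) = 1 := by
  have := h.e_add x (-x); rw [add_neg_cancel, e0 h] at this; linarith

lemma e_ge_one {x : K} (hx : 0 ≤ x) : 1 ≤ e x := by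
  rcases eq_or_lt_of_le hx with rfl | hx
  · exact (e0 h).ge
  · have := h.e_mono hx; rw [e0 h] at this; linarith

lemma e_le_one {x : K} (hx : x ≤ 0) : e x ≤ 1 := by
  rcases eq_or_lt_of_le hx with rfl | hx
  · exact (e0 h).le
  · have := h.e_mono hx; rw [e0 h] at this; linarith

lemma eT_up {d : K} (h0 : 0 ≤ d) (h1 : d ≤ 1) : e d ≤ 1 + 2 * d := by
  rcases eq_or_lt_of_le h0 with rfl | hd
  · rw [e0 h]; linarith
  · have := h.e_T1 d (by rwa [abs_of_pos hd]) (by rwa [abs_of_pos hd])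
    have h2 := abs_lt.1 this
    nlinarith [h2.2]

lemma eT_lo {d : K} (h0 : 0 ≤ d) (h1 : d ≤ 1 / 2) : 1 + d / 2 ≤ e d := by
  rcases eq_or_lt_of_le h0 with rfl | hd
  · rw [e0 h]; linarith
  · have := h.e_T1 d (by rwa [abs_of_pos hd]) (by rw [abs_of_pos hd]; linarith)
    have h2 := abs_lt.1 this
    nlinarith [h2.1]

lemma e_nsmul (k : ℕ) (x : K) : e ((k : K) * x) = (e x) ^ k := by
  induction k with
  | zero => simp [e0 h]
  | succ n ih =>
      push_cast
      rw [add_mul, one_mul, h.e_add, ih, pow_succ]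

lemma e_one_lt : e 1 < 3 := by
  have := h.e_T1 1 (by norm_num) (by norm_num)
  have h2 := abs_lt.1 this
  nlinarith [h2.2]

lemma e_nat_up (k : ℕ) : e (k : K) ≤ (3 : K) ^ k := by
  have : e (k : K) = (e 1) ^ k := by
    have := e_nsmul h k 1; rwa [mul_one] at this
  rw [this]
  exact pow_le_pow_left₀ (h.e_pos 1).le (e_one_lt h).le k

lemma e_lb {N : ℕ} {x : K} (hx : -(N : K) ≤ x) : 1 ≤ (3 : K) ^ N * e x := by
  have h1 : e x * e (-x) = 1 := e_mul_neg h x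
  have h2 : e (-x) ≤ (3:K)^N := by
    calc e (-x) ≤ e (N : K) := (h.e_mono.le_iff_le).2 (by linarith)
    _ ≤ (3:K)^N := e_nat_up h N
  have h3 := h.e_pos (-x)
  have h4 := h.e_pos x
  nlinarith


lemma eT_lo2 {d : K} (h0 : 0 ≤ d) (h1 : d ≤ 1) : 1 + d - d ^ 2 ≤ e d := by
  rcases eq_or_lt_of_le h0 with rfl | hd
  · rw [e0 h]; norm_num
  · have := h.e_T1 d (by rwa [abs_of_pos hd]) (by rwa [abs_of_pos hd])
    have h2 := abs_lt.1 this
    nlinarith [h2.1]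

lemma e_half : (8/5 : K) ≤ e (1/2) := by
  have h64 : (4159/4096 : K) ≤ e (1/64) := by
    have := eT_lo2 h (d := 1/64) (by norm_num) (by norm_num)
    nlinarith
  have hpow : e (1/2 : K) = (e (1/64)) ^ 32 := by
    have h2 : ((32:ℕ):K) * (1/64 : K) = 1/2 := by norm_num
    rw [← h2, e_nsmul h]
  rw [hpow]
  calc (8/5 : K) ≤ (4159/4096 : K) ^ 32 := by norm_num
  _ ≤ (e (1/64)) ^ 32 := pow_le_pow_left₀ (by norm_num) h64 32

lemma e_half_pow (k : ℕ) : ((8/5 : K)) ^ k ≤ e ((k : K) * (1/2)) := by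
  rw [e_nsmul h k (1/2 : K)]
  exact pow_le_pow_left₀ (by norm_num) (e_half h) k

lemma e_step {t : K} (ht : 1 ≤ t) : t + 1 ≤ e t := by
  rcases le_or_gt 4 t with h4 | h4
  · have := h.e_GA 2 t (by push_cast; nlinarith)
    nlinarith
  rcases le_or_gt 2 t with h2 | h2
  · have := e_half_pow h 4
    norm_num at this
    have hm : e 2 ≤ e t := (h.e_mono.le_iff_le).2 h2
    nlinarith
  rcases le_or_gt (3/2) t with h3 | h3
  · have := e_half_pow h 3
    norm_num at this
    have hm : e (3/2) ≤ e t := (h.e_mono.le_iff_le).2 h3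
    nlinarith
  · have := e_half_pow h 2
    norm_num at this
    have hm : e 1 ≤ e t := (h.e_mono.le_iff_le).2 ht
    nlinarith

lemma eLip_up {N : ℕ} {a b : K} (ha : -(N : K) ≤ a) (hab : a ≤ b) (hb : b ≤ (N : K)) :
    e b - e a ≤ 2 * 3 ^ N * (b - a) := by
  have key : e b = e a * e (b - a) := by
    rw [← h.e_add]; ring_nf
  have hd0 : 0 ≤ b - a := by linarith
  have h3 : (0:K) < 3 ^ N := by positivity
  have heaN : e a ≤ (3:K)^N :=
    le_trans ((h.e_mono.le_iff_le).2 (le_trans hab hb)) (e_nat_up h N)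
  have hea : 0 < e a := h.e_pos a
  rcases le_or_gt (b - a) 1 with h1 | h1
  · have hup := eT_up h hd0 h1
    have hge := e_ge_one h (x := b - a) hd0
    nlinarith
  · have hebN : e b ≤ (3:K)^N :=
      le_trans ((h.e_mono.le_iff_le).2 hb) (e_nat_up h N)
    nlinarith

lemma eLip_lo {N : ℕ} {a b : K} (ha : -(N : K) ≤ a) (hab : a ≤ b) (hb : b ≤ (N : K)) :
    b - a ≤ 8 * ((N : K) + 1) * 3 ^ N * (e b - e a) := by
  have key : e b = e a * e (b - a) := by
    rw [← h.e_add]; ring_nf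
  have hd0 : 0 ≤ b - a := by linarith
  have hdN : b - a ≤ 2 * N := by
    have : (0:K) ≤ N := Nat.cast_nonneg N
    linarith
  have h3 : (0:K) < 3 ^ N := by positivity
  have hea : 0 < e a := h.e_pos a
  have heaI : 1 ≤ (3:K)^N * e a := e_lb h ha
  have hN0 : (0:K) ≤ N := Nat.cast_nonneg N
  rcases le_or_gt (b - a) (1/2) with h1 | h1
  · have hlo := eT_lo h hd0 h1
    have s1 : e a * ((b - a)/2) ≤ e b - e a := by nlinarith
    nlinarith [mul_le_mul_of_nonneg_right heaI hd0,
      mul_nonneg (mul_nonneg hN0 h3.le) (mul_nonneg hea.le hd0),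
      mul_le_mul_of_nonneg_left s1 (by positivity : (0:K) ≤ 8*((N:K)+1)*3^N)]
  · have hmid : e a * e (1/2) ≤ e b := by
      have : e (a + 1/2) ≤ e b := (h.e_mono.le_iff_le).2 (by linarith)
      rwa [h.e_add] at this
    have hhalf : (8/5 : K) ≤ e (1/2) := e_half h
    have s1 : (3/5 : K) * e a ≤ e b - e a := by
      nlinarith [mul_le_mul_of_nonneg_left hhalf hea.le]
    have e1 : (8*((N:K)+1)*3^N) * ((3/5) * e a) ≤ (8*((N:K)+1)*3^N) * (e b - e a) :=
      mul_le_mul_of_nonneg_left s1 (by positivity)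
    have e3 : (24/5)*(N:K)*1 ≤ (24/5)*(N:K)*((3:K)^N * e a) :=
      mul_le_mul_of_nonneg_left heaI (by positivity)
    calc b - a ≤ 2*(N:K) := hdN
    _ ≤ (24/5)*(N:K)*((3:K)^N * e a) + (24/5)*((3:K)^N * e a) := by linarith
    _ = (8*((N:K)+1)*3^N) * ((3/5) * e a) := by ring
    _ ≤ (8*((N:K)+1)*3^N) * (e b - e a) := e1

lemma T0 : T 0 = 1 := by rw [h.T_eq_e 0 le_rfl zero_le_one, e0 h]

lemma T_succ' {x : K} (hx : 0 ≤ x) : T (x + 1) = e (T x) := by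
  rcases eq_or_lt_of_le hx with rfl | hx
  · rw [zero_add, h.T_eq_e 1 zero_le_one le_rfl, T0 h]
  · exact h.T_succ x hx

lemma T_ge_one {x : K} (hx : 0 ≤ x) : 1 ≤ T x := by
  rcases eq_or_lt_of_le hx with rfl | hx
  · exact (T0 h).ge
  · have := h.T_mono hx; rw [T0 h] at this; linarith

lemma T_inv {x : K} (hx : x ≤ 0) : T x * T (-x) = 1 := by
  rcases eq_or_lt_of_le hx with rfl | hx
  · rw [neg_zero, T0 h]; norm_num
  · exact h.T_neg x hx

end Aux

def Bnd : ℕ → ℕ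
  | 0 => 1
  | m + 1 => 3 ^ (Bnd m)

lemma Bnd_pos (m : ℕ) : 0 < Bnd m := by
  cases m with
  | zero => norm_num [Bnd]
  | succ n => exact pow_pos (by norm_num) _

section Aux2
variable {K : Type*} [Field K] [LinearOrder K] [IsStrictOrderedRing K] {e T : K → K} (h : IsOTF e T)
include h

lemma T_nat_up : ∀ m : ℕ, T (m : K) ≤ ((Bnd m : ℕ) : K) := by
  intro m; induction m with
  | zero => simp [T0 h, Bnd]
  | succ n ih =>
    have h1 : ((n:K) + 1 : K) = ((n+1 : ℕ) : K) := by push_cast; ring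
    rw [← h1, T_succ' h (by positivity)]
    calc e (T (n:K)) ≤ e ((Bnd n : ℕ) : K) := (h.e_mono.le_iff_le).2 ih
    _ ≤ (3:K) ^ (Bnd n) := e_nat_up h _
    _ = ((Bnd (n+1) : ℕ) : K) := by rw [show Bnd (n+1) = 3 ^ Bnd n from rfl]; push_cast; ring

lemma T_nat_lo : ∀ m : ℕ, ((m : ℕ) : K) ≤ T (m : K) := by
  intro m; induction m with
  | zero => simp [T0 h]
  | succ n ih =>
    have h1 : ((n:K) + 1 : K) = ((n+1 : ℕ) : K) := by push_cast; ring
    rw [← h1, T_succ' h (by positivity)]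
    have hg : 1 ≤ T (n:K) := T_ge_one h (by positivity)
    have := e_step h hg
    push_cast
    linarith

set_option maxHeartbeats 1600000 in
lemma TLip : ∀ m : ℕ, ∃ C D : ℕ, 0 < C ∧ 0 < D ∧ ∀ a b : K, 0 ≤ a → a ≤ b → b ≤ (m:K) →
    (T b - T a ≤ (C:K) * (b - a) ∧ b - a ≤ (D:K) * (T b - T a)) := by
  intro m; induction m with
  | zero =>
    refine ⟨1, 1, one_pos, one_pos, fun a b ha hab hb => ?_⟩
    have hb0 : b ≤ 0 := by exact_mod_cast hb
    have : a = b := le_antisymm hab (hb0.trans ha)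
    subst this; simp
  | succ m ih =>
    obtain ⟨C, D, hC, hD, H⟩ := ih
    set N := Bnd m with hN
    have hC0 : (0:K) ≤ C := Nat.cast_nonneg C
    have hD0 : (0:K) < D := by exact_mod_cast hD
    have h3 : (0:K) < 3 ^ N := by positivity
    -- step on [m, m+1]
    have step : ∀ a b : K, (m:K) ≤ a → a ≤ b → b ≤ (m:K) + 1 →
        (T b - T a ≤ (2*(3:K)^N*(C:K) + 6) * (b - a) ∧
         b - a ≤ (48 + 8*((N:K)+1)*(3:K)^N*(D:K)) * (T b - T a)) := by
      intro a b ha hab hb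
      have hTba : 0 ≤ T b - T a := by
        have := h.T_mono.le_iff_le.2 hab; linarith
      have hd0 : (0:K) ≤ b - a := by linarith
      rcases Nat.eq_zero_or_pos m with rfl | hm
      · -- a, b ∈ [0,1] : T = e
        push_cast at ha hb
        have hea : T a = e a := h.T_eq_e a ha (by linarith)
        have heb : T b = e b := h.T_eq_e b (by linarith) (by linarith)
        have hup := eLip_up h (N := 1) (a := a) (b := b) (by push_cast; linarith)
          hab (by push_cast; linarith)
        have hlo := eLip_lo h (N := 1) (a := a) (b := b) (by push_cast; linarith)
          hab (by push_cast; linarith)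
        push_cast at hup hlo
        constructor
        · rw [hea, heb]
          have hx1 : (0:K) ≤ 2*(3:K)^N*(C:K)*(b-a) :=
            mul_nonneg (mul_nonneg (by positivity) hC0) hd0
          linarith
        · rw [hea, heb]
          have hee : (0:K) ≤ e b - e a := by rw [← hea, ← heb]; exact hTba
          have hx2 : (0:K) ≤ 8*((N:K)+1)*(3:K)^N*(D:K)*(e b - e a) :=
            mul_nonneg (mul_nonneg (by positivity) hD0.le) hee
          linarith
      · -- m ≥ 1
        have hm1 : (1:K) ≤ (m:K) := by exact_mod_cast hm
        have ha1 : (0:K) ≤ a - 1 := by linarith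
        have hab1 : a - 1 ≤ b - 1 := by linarith
        have hb1 : b - 1 ≤ (m:K) := by linarith
        have hTa : T a = e (T (a-1)) := by
          have := T_succ' h ha1; rwa [sub_add_cancel] at this
        have hTb : T b = e (T (b-1)) := by
          have := T_succ' h (le_trans ha1 hab1); rwa [sub_add_cancel] at this
        have hu1 : 1 ≤ T (a-1) := T_ge_one h ha1
        have huv : T (a-1) ≤ T (b-1) := h.T_mono.le_iff_le.2 hab1
        have hvN : T (b-1) ≤ (N:K) := by
          calc T (b-1) ≤ T (m:K) := h.T_mono.le_iff_le.2 hb1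
          _ ≤ (N:K) := T_nat_up h m
        have hNlb : -(N:K) ≤ T (a-1) := by
          have : (0:K) ≤ N := Nat.cast_nonneg N
          linarith
        have hup := eLip_up h (N := N) hNlb huv hvN
        have hlo := eLip_lo h (N := N) hNlb huv hvN
        obtain ⟨HU, HL⟩ := H (a-1) (b-1) ha1 hab1 hb1
        have hsub : (b-1) - (a-1) = b - a := by ring
        rw [hsub] at HU HL
        constructor
        · rw [hTa, hTb]
          calc e (T (b-1)) - e (T (a-1)) ≤ 2*3^N*(T (b-1) - T (a-1)) := hup
          _ ≤ 2*(3:K)^N*((C:K)*(b-a)) := by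
              have := mul_le_mul_of_nonneg_left HU (by positivity : (0:K) ≤ 2*(3:K)^N)
              linarith
          _ ≤ (2*(3:K)^N*(C:K) + 6) * (b-a) := by
              have hx1 : (0:K) ≤ 6*(b-a) := by linarith
              linarith [hx1]
        · rw [hTa, hTb]
          have hee : (0:K) ≤ e (T (b-1)) - e (T (a-1)) := by
            rw [← hTa, ← hTb]; exact hTba
          calc b - a ≤ (D:K)*(T (b-1) - T (a-1)) := HL
          _ ≤ (D:K)*(8*((N:K)+1)*(3:K)^N*(e (T (b-1)) - e (T (a-1)))) := by
              have := mul_le_mul_of_nonneg_left hlo hD0.le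
              linarith
          _ ≤ (48 + 8*((N:K)+1)*(3:K)^N*(D:K)) * (e (T (b-1)) - e (T (a-1))) := by
              have hx2 : (0:K) ≤ 48*(e (T (b-1)) - e (T (a-1))) := by linarith
              linarith [hx2]
    -- assemble
    refine ⟨C + (2*3^N*C + 6), D + (48 + 8*(N+1)*3^N*D), by positivity, by positivity, ?_⟩
    have hcast1 : ((C + (2*3^N*C + 6) : ℕ) : K) = (C:K) + (2*(3:K)^N*(C:K) + 6) := by push_cast; ring
    have hcast2 : ((D + (48 + 8*(N+1)*3^N*D) : ℕ) : K) = (D:K) + (48 + 8*((N:K)+1)*(3:K)^N*(D:K)) := by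
      push_cast; ring
    intro a b ha hab hb
    rw [hcast1, hcast2]
    have hTba : 0 ≤ T b - T a := by
      have := h.T_mono.le_iff_le.2 hab; linarith
    have hd0 : (0:K) ≤ b - a := by linarith
    have hCK : (0:K) ≤ 2*(3:K)^N*(C:K) + 6 := by positivity
    have hDK : (0:K) ≤ 48 + 8*((N:K)+1)*(3:K)^N*(D:K) := by positivity
    have hb1 : b ≤ (m:K) + 1 := by push_cast at hb; linarith
    rcases le_or_gt b (m:K) with hbm | hbm
    · obtain ⟨HU, HL⟩ := H a b ha hab hbm
      refine ⟨?_, ?_⟩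
      · have := mul_nonneg hCK hd0; linarith
      · have := mul_nonneg hDK hTba; linarith
    rcases le_or_gt (m:K) a with ham | ham
    · obtain ⟨HU, HL⟩ := step a b ham hab hb1
      refine ⟨?_, ?_⟩
      · have := mul_nonneg hC0 hd0; linarith
      · have := mul_nonneg hD0.le hTba; linarith
    · obtain ⟨HU1, HL1⟩ := H a (m:K) ha ham.le le_rfl
      obtain ⟨HU2, HL2⟩ := step (m:K) b le_rfl hbm.le hb1
      have hT1 : 0 ≤ T (m:K) - T a := by
        have := h.T_mono.le_iff_le.2 ham.le; linarith
      have hT2 : 0 ≤ T b - T (m:K) := by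
        have := h.T_mono.le_iff_le.2 hbm.le; linarith
      have hma : (0:K) ≤ (m:K) - a := by linarith
      have hbm' : (0:K) ≤ b - (m:K) := by linarith
      refine ⟨?_, ?_⟩
      · have x1 := mul_nonneg hC0 hbm'
        have x2 := mul_nonneg hCK hma
        linarith
      · have x1 := mul_nonneg hD0.le hT2
        have x2 := mul_nonneg hDK hT1
        linarith

end Aux2

section Infml
variable {K : Type*} [Field K] [LinearOrder K] [IsStrictOrderedRing K]

lemma infml_zero : IsInfml (0:K) := fun n hn => by
  have : (0:K) < (n:K)⁻¹ := by
    have : (0:K) < (n:K) := by exact_mod_cast hn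
    positivity
  simpa using this

lemma infml_dom {x y : K} (hy : IsInfml y) (hxy : |x| ≤ |y|) : IsInfml x :=
  fun n hn => lt_of_le_of_lt hxy (hy n hn)

lemma infml_mul_nat {x y : K} (C : ℕ) (hy : IsInfml y) (hxy : |x| ≤ (C:K) * |y|) :
    IsInfml x := by
  intro n hn
  have h1 := hy ((C+1)*n) (by positivity)
  push_cast at h1
  have hC1 : (0:K) < (C:K)+1 := by positivity
  have hn0 : (0:K) < (n:K) := by exact_mod_cast hn
  have habs : (0:K) ≤ |y| := abs_nonneg y
  have key : ((C:K)+1) * |y| < (n:K)⁻¹ := by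
    rw [mul_inv] at h1
    calc ((C:K)+1)*|y| < ((C:K)+1) * (((C:K)+1)⁻¹ * ((n:K))⁻¹) :=
      mul_lt_mul_of_pos_left h1 hC1
    _ = ((n:K))⁻¹ := by field_simp
  have : (C:K) * |y| ≤ ((C:K)+1) * |y| := by nlinarith
  calc |x| ≤ (C:K)*|y| := hxy
  _ ≤ ((C:K)+1)*|y| := this
  _ < _ := key

lemma infml_sub {x y : K} (hx : IsInfml x) (hy : IsInfml y) : IsInfml (x - y) := by
  intro n hn
  have h1 := hx (2*n) (by positivity)
  have h2 := hy (2*n) (by positivity)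
  push_cast at h1 h2
  have hn0 : (0:K) < (n:K) := by exact_mod_cast hn
  have hkey : ((2:K)*(n:K))⁻¹ + ((2:K)*(n:K))⁻¹ = ((n:K))⁻¹ := by
    ring
  calc |x - y| ≤ |x| + |y| := abs_sub x y
  _ < ((2:K)*(n:K))⁻¹ + ((2:K)*(n:K))⁻¹ := by exact add_lt_add h1 h2
  _ = ((n:K))⁻¹ := hkey

lemma not_infml_of_lb {x : K} (n : ℕ) (hn : 0 < n) (hx : ((n:ℕ):K)⁻¹ ≤ |x|) :
    ¬ IsInfml x := fun h => absurd (h n hn) (not_lt.2 hx)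

lemma not_infml_elim {x : K} (hx : ¬ IsInfml x) : ∃ n : ℕ, 0 < n ∧ ((n:ℕ):K)⁻¹ ≤ |x| := by
  unfold IsInfml at hx
  push_neg at hx
  obtain ⟨n, hn, hle⟩ := hx
  exact ⟨n, hn, hle⟩

lemma inv_le_of_one_le_mul {x : K} {k : ℕ} (hk : 0 < k) (hx : 1 ≤ (k:K)*x) :
    ((k:ℕ):K)⁻¹ ≤ x := by
  have hk0 : (0:K) < (k:K) := by exact_mod_cast hk
  rw [inv_le_iff_one_le_mul₀ hk0]
  linarith [hx]

end Infml

section Aux3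
variable {K : Type*} [Field K] [LinearOrder K] [IsStrictOrderedRing K] {e T : K → K} (h : IsOTF e T)
include h

lemma T_neg_inv {x : K} (hx : x ≤ 0) : T x = (T (-x))⁻¹ := by
  have h1 := T_inv h hx
  exact eq_inv_of_mul_eq_one_left h1

lemma infml_T_one {x : K} (hx : IsInfml x) : IsInfml (T x - 1) := by
  have hx1 : |x| < 1 := by simpa using hx 1 one_pos
  have hxlt := abs_lt.1 hx1
  rcases le_or_gt 0 x with h0 | h0
  · have hTe : T x = e x := h.T_eq_e x h0 hxlt.2.le
    have hup := eT_up h h0 hxlt.2.le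
    have hge := e_ge_one h h0
    apply infml_mul_nat 2 hx
    rw [hTe, abs_of_nonneg (by linarith : (0:K) ≤ e x - 1), abs_of_nonneg h0]
    push_cast
    linarith
  · have hnx0 : (0:K) ≤ -x := by linarith
    have hnx1 : -x ≤ 1 := by linarith
    have hTx : T x = (T (-x))⁻¹ := T_neg_inv h h0.le
    have hTe : T (-x) = e (-x) := h.T_eq_e (-x) hnx0 hnx1
    have hup := eT_up h hnx0 hnx1
    have hge := e_ge_one h hnx0
    have hv0 : (0:K) < e (-x) := h.e_pos (-x)
    apply infml_mul_nat 2 hx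
    rw [hTx, hTe]
    have hid : (e (-x))⁻¹ - 1 = (1 - e (-x)) / (e (-x)) := by
      field_simp
    rw [hid, abs_div, abs_of_pos hv0, abs_of_neg h0]
    have habs : |1 - e (-x)| = e (-x) - 1 := by
      rw [abs_of_nonpos (by linarith)]; ring
    rw [habs]
    have hd : (e (-x) - 1) / e (-x) ≤ e (-x) - 1 :=
      div_le_self (by linarith) hge
    push_cast
    linarith

set_option maxHeartbeats 1600000 in
lemma welldef_le {a b : K} (hfa : IsFinElt a) (hfb : IsFinElt b) (hab : a ≤ b)
    (hinf : IsInfml (b - a)) : IsInfml (T b - T a) := by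
  obtain ⟨m1, hm1⟩ := hfa
  obtain ⟨m2, hm2⟩ := hfb
  set M := m1 + m2 with hM
  have hma : |a| ≤ (M:K) := by
    calc |a| ≤ (m1:K) := hm1
    _ ≤ (M:K) := by exact_mod_cast Nat.le_add_right m1 m2
  have hmb : |b| ≤ (M:K) := by
    calc |b| ≤ (m2:K) := hm2
    _ ≤ (M:K) := by exact_mod_cast Nat.le_add_left m2 m1
  obtain ⟨C, D, hC, hD, H⟩ := TLip h M
  have hTba : 0 ≤ T b - T a := by
    have := h.T_mono.le_iff_le.2 hab; linarith
  rcases le_or_gt 0 a with h0 | h0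
  · -- both nonneg
    obtain ⟨HU, HL⟩ := H a b h0 hab (le_trans (le_abs_self b) hmb)
    apply infml_mul_nat C hinf
    rw [abs_of_nonneg hTba, abs_of_nonneg (by linarith : (0:K) ≤ b - a)]
    exact HU
  rcases le_or_gt b 0 with hb0 | hb0
  · -- both nonpos
    have hnb0 : (0:K) ≤ -b := by linarith
    have hnba : -b ≤ -a := by linarith
    have hnaM : -a ≤ (M:K) := le_trans (neg_le_abs a) hma
    obtain ⟨HU, HL⟩ := H (-b) (-a) hnb0 hnba hnaM
    have hs : -a - -b = b - a := by ring
    rw [hs] at HU HL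
    set u := T (-b) with hu
    set v := T (-a) with hv
    have hu1 : 1 ≤ u := T_ge_one h hnb0
    have hv1 : 1 ≤ v := T_ge_one h (by linarith : (0:K) ≤ -a)
    have huv : u ≤ v := h.T_mono.le_iff_le.2 hnba
    have hTb : T b = u⁻¹ := T_neg_inv h hb0
    have hTa : T a = v⁻¹ := T_neg_inv h h0.le
    apply infml_mul_nat C hinf
    rw [abs_of_nonneg hTba, abs_of_nonneg (by linarith : (0:K) ≤ b - a)]
    have hid : T b - T a = (v - u)/(u*v) := by
      rw [hTb, hTa]
      field_simp
    rw [hid]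
    calc (v - u)/(u*v) ≤ v - u := div_le_self (by linarith) (by nlinarith)
    _ ≤ (C:K) * (b - a) := HU
  · -- a < 0 < b : both infinitesimal
    have hia : IsInfml a := by
      apply infml_dom hinf
      rw [abs_of_neg h0, abs_of_nonneg (by linarith : (0:K) ≤ b - a)]
      linarith
    have hib : IsInfml b := by
      apply infml_dom hinf
      rw [abs_of_pos hb0, abs_of_nonneg (by linarith : (0:K) ≤ b - a)]
      linarith
    have h1 := infml_T_one h hib
    have h2 := infml_T_one h hia
    have : T b - T a = (T b - 1) - (T a - 1) := by ring
    rw [this]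
    exact infml_sub h1 h2

set_option maxHeartbeats 1600000 in
lemma part2 (a : K) (hfa : IsFinElt a) :
      IsFinElt (T a) ∧ 0 < T a ∧ ¬ IsInfml (T a) := by
  obtain ⟨m, hm⟩ := hfa
  refine ⟨?_, h.T_pos a, ?_⟩
  · rcases le_or_gt 0 a with h0 | h0
    · refine ⟨Bnd m, ?_⟩
      have h1 : T a ≤ T (m:K) := h.T_mono.le_iff_le.2 (le_trans (le_abs_self a) hm)
      have h2 := T_nat_up h m
      rw [abs_of_pos (h.T_pos a)]
      linarith
    · refine ⟨1, ?_⟩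
      have hTx : T a = (T (-a))⁻¹ := T_neg_inv h h0.le
      have h1 : 1 ≤ T (-a) := T_ge_one h (by linarith)
      have h2 : (0:K) < T (-a) := h.T_pos _
      have h3 : (T (-a))⁻¹ * T (-a) = 1 := inv_mul_cancel₀ (ne_of_gt h2)
      rw [abs_of_pos (h.T_pos a), hTx]
      push_cast
      nlinarith [inv_nonneg.2 h2.le]
  · rcases le_or_gt 0 a with h0 | h0
    · apply not_infml_of_lb 1 one_pos
      rw [abs_of_pos (h.T_pos a)]
      have := T_ge_one h h0
      push_cast
      simpa using this
    · apply not_infml_of_lb (Bnd m) (Bnd_pos m)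
      have hTx : T a = (T (-a))⁻¹ := T_neg_inv h h0.le
      have h1 : T (-a) ≤ ((Bnd m : ℕ):K) := by
        have hle : -a ≤ (m:K) := le_trans (neg_le_abs a) hm
        exact le_trans (h.T_mono.le_iff_le.2 hle) (T_nat_up h m)
      rw [abs_of_pos (h.T_pos a), hTx]
      have h2 : (0:K) < T (-a) := h.T_pos _
      exact inv_anti₀ h2 h1
set_option maxHeartbeats 1600000 in
lemma part3 (a b : K) (hfa : IsFinElt a) (hfb : IsFinElt b) (hlt : a < b)
      (hni : ¬ IsInfml (b - a)) : T a < T b ∧ ¬ IsInfml (T b - T a) := by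
  have hTlt : T a < T b := h.T_mono hlt
  have hpos : (0:K) < T b - T a := by linarith
  refine ⟨hTlt, ?_⟩
  obtain ⟨n, hn, hnle⟩ := not_infml_elim hni
  rw [abs_of_pos (by linarith : (0:K) < b - a)] at hnle
  obtain ⟨m1, hm1⟩ := hfa
  obtain ⟨m2, hm2⟩ := hfb
  set M := m1 + m2 with hM
  have hma : |a| ≤ (M:K) := by
    calc |a| ≤ (m1:K) := hm1
    _ ≤ (M:K) := by exact_mod_cast Nat.le_add_right m1 m2
  have hmb : |b| ≤ (M:K) := by
    calc |b| ≤ (m2:K) := hm2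
    _ ≤ (M:K) := by exact_mod_cast Nat.le_add_left m2 m1
  obtain ⟨C, D, hC, hD, H⟩ := TLip h M
  have hD0 : (0:K) < (D:K) := by exact_mod_cast hD
  have hn0 : (0:K) < (n:K) := by exact_mod_cast hn
  have h1n : 1 ≤ (n:K)*(b-a) := by
    rw [inv_le_iff_one_le_mul₀ hn0] at hnle
    linarith [hnle]
  rcases le_or_gt 0 a with h0 | h0
  · obtain ⟨HU, HL⟩ := H a b h0 hlt.le (le_trans (le_abs_self b) hmb)
    apply not_infml_of_lb (n*D) (Nat.mul_pos hn hD)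
    rw [abs_of_pos hpos]
    apply inv_le_of_one_le_mul (Nat.mul_pos hn hD)
    push_cast
    have s1 := mul_le_mul_of_nonneg_left HL hn0.le
    linarith
  rcases le_or_gt b 0 with hb0 | hb0
  · obtain ⟨B, hB⟩ : ∃ B : ℕ, B = Bnd M := ⟨_, rfl⟩
    have hBpos : 0 < B := by rw [hB]; exact Bnd_pos M
    have hnb0 : (0:K) ≤ -b := by linarith
    have hnba : -b ≤ -a := by linarith
    have hnaM : -a ≤ (M:K) := le_trans (neg_le_abs a) hma
    obtain ⟨HU, HL⟩ := H (-b) (-a) hnb0 hnba hnaM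
    have hs : -a - -b = b - a := by ring
    rw [hs] at HL
    set u := T (-b) with hu
    set v := T (-a) with hv
    have hu1 : 1 ≤ u := T_ge_one h hnb0
    have hv1 : 1 ≤ v := T_ge_one h (by linarith)
    have huB : u ≤ (B:K) := by
      calc u ≤ T (M:K) := h.T_mono.le_iff_le.2 (le_trans hnba hnaM)
      _ ≤ (B:K) := by rw [hB]; exact T_nat_up h M
    have hvB : v ≤ (B:K) := by
      calc v ≤ T (M:K) := h.T_mono.le_iff_le.2 hnaM
      _ ≤ (B:K) := by rw [hB]; exact T_nat_up h M
    have hTb : T b = u⁻¹ := T_neg_inv h hb0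
    have hTa : T a = v⁻¹ := T_neg_inv h h0.le
    have hid : T b - T a = (v-u)/(u*v) := by
      rw [hTb, hTa]; field_simp
    apply not_infml_of_lb (n*D*B*B)
      (Nat.mul_pos (Nat.mul_pos (Nat.mul_pos hn hD) hBpos) hBpos)
    rw [abs_of_pos hpos]
    apply inv_le_of_one_le_mul
      (Nat.mul_pos (Nat.mul_pos (Nat.mul_pos hn hD) hBpos) hBpos)
    rw [hid]
    push_cast
    rw [← mul_div_assoc, le_div_iff₀ (by nlinarith : (0:K) < u*v), one_mul]
    have s1 : 1 ≤ (n:K)*((D:K)*(v-u)) :=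
      le_trans h1n (mul_le_mul_of_nonneg_left HL hn0.le)
    have s2 : u*v ≤ (B:K)*(B:K) :=
      mul_le_mul huB hvB (by linarith) (Nat.cast_nonneg B)
    have s3 := mul_le_mul_of_nonneg_left s1
      (by positivity : (0:K) ≤ (B:K)*(B:K))
    linarith
  · -- a < 0 < b
    obtain ⟨B, hB⟩ : ∃ B : ℕ, B = Bnd M := ⟨_, rfl⟩
    have hBpos : 0 < B := by rw [hB]; exact Bnd_pos M
    have hMb : b ≤ (M:K) := le_trans (le_abs_self b) hmb
    have hnaM : -a ≤ (M:K) := le_trans (neg_le_abs a) hma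
    have h2n0 : (0:K) < 2*(n:K) := by positivity
    have hkey : ((2:K)*(n:K))⁻¹ + ((2:K)*(n:K))⁻¹ = ((n:K))⁻¹ := by
      ring
    rcases le_or_gt ((2:K)*(n:K))⁻¹ b with hbig | hbig
    · obtain ⟨HU, HL⟩ := H 0 b le_rfl hb0.le hMb
      rw [T0 h, sub_zero] at HL
      have hTa1 : T a ≤ 1 := by
        rw [← T0 h]; exact h.T_mono.le_iff_le.2 h0.le
      apply not_infml_of_lb (2*n*D)
        (Nat.mul_pos (Nat.mul_pos (by norm_num) hn) hD)
      rw [abs_of_pos hpos]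
      apply inv_le_of_one_le_mul
        (Nat.mul_pos (Nat.mul_pos (by norm_num) hn) hD)
      push_cast
      have h1b : 1 ≤ 2*(n:K)*b := by
        rw [inv_le_iff_one_le_mul₀ h2n0] at hbig
        linarith [hbig]
      have s1 := mul_le_mul_of_nonneg_left HL (by positivity : (0:K) ≤ 2*(n:K))
      have s2 : (0:K) ≤ 2*(n:K)*(D:K)*(1 - T a) := by
        have : (0:K) ≤ 1 - T a := by linarith
        positivity
      linarith
    · have hna : ((2:K)*(n:K))⁻¹ ≤ -a := by linarith
      set v := T (-a) with hv
      have hv1 : 1 ≤ v := T_ge_one h (by linarith)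
      have hvB : v ≤ (B:K) := by
        calc v ≤ T (M:K) := h.T_mono.le_iff_le.2 hnaM
        _ ≤ (B:K) := by rw [hB]; exact T_nat_up h M
      obtain ⟨HU, HL⟩ := H 0 (-a) le_rfl (by linarith) hnaM
      rw [T0 h, sub_zero] at HL
      have hTa : T a = v⁻¹ := T_neg_inv h h0.le
      have hTb1 : 1 ≤ T b := T_ge_one h hb0.le
      apply not_infml_of_lb (2*n*D*B)
        (Nat.mul_pos (Nat.mul_pos (Nat.mul_pos (by norm_num) hn) hD) hBpos)
      rw [abs_of_pos hpos]
      apply inv_le_of_one_le_mul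
        (Nat.mul_pos (Nat.mul_pos (Nat.mul_pos (by norm_num) hn) hD) hBpos)
      push_cast
      have h1a : 1 ≤ 2*(n:K)*(-a) := by
        rw [inv_le_iff_one_le_mul₀ h2n0] at hna
        linarith [hna]
      have s1 : 1 ≤ 2*(n:K)*((D:K)*(v-1)) :=
        le_trans h1a (mul_le_mul_of_nonneg_left HL (by positivity))
      have s2 : v ≤ 2*(n:K)*(D:K)*(B:K)*(v-1) := by
        have s3 := mul_le_mul_of_nonneg_left s1 (Nat.cast_nonneg B : (0:K) ≤ (B:K))
        linarith
      have hv0 : (0:K) < v := by linarith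
      have hstep : 1 - v⁻¹ ≤ T b - T a := by rw [hTa]; linarith
      calc (1:K) = v * v⁻¹ := (mul_inv_cancel₀ hv0.ne').symm
      _ ≤ (2*(n:K)*(D:K)*(B:K)*(v-1)) * v⁻¹ :=
        mul_le_mul_of_nonneg_right s2 (inv_nonneg.2 hv0.le)
      _ = 2*(n:K)*(D:K)*(B:K)*(1 - v⁻¹) := by
        field_simp
      _ ≤ 2*(n:K)*(D:K)*(B:K)*(T b - T a) :=
        mul_le_mul_of_nonneg_left hstep (by positivity)
set_option maxHeartbeats 1600000 in
lemma part4 (c : K) (hfc : IsFinElt c) (hc0 : 0 < c) (hni : ¬ IsInfml c) :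
      ∃ a : K, IsFinElt a ∧ IsInfml (T a - c) := by
  obtain ⟨m, hm⟩ := hfc
  rw [abs_of_pos hc0] at hm
  obtain ⟨n, hn, hnle⟩ := not_infml_elim hni
  rw [abs_of_pos hc0] at hnle
  obtain ⟨x, hx⟩ := h.T_surj c hc0
  have hn0 : (0:K) < (n:K) := by exact_mod_cast hn
  have hxm : x ≤ (m:K) := by
    have h1 : T x ≤ T (m:K) := by
      rw [hx]; exact le_trans hm (T_nat_lo h m)
    exact h.T_mono.le_iff_le.1 h1
  have hxn : -(n:K) ≤ x := by
    have h1 : T (-(n:K)) ≤ T x := by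
      have h2 : (n:K) ≤ T (n:K) := T_nat_lo h n
      have h4 : T (-(n:K)) = (T ((n:K)))⁻¹ := by
        have := T_neg_inv h (by linarith : -(n:K) ≤ 0)
        rwa [neg_neg] at this
      have h3 : (T ((n:K)))⁻¹ ≤ ((n:K))⁻¹ := inv_anti₀ hn0 h2
      rw [hx, h4]
      exact le_trans h3 hnle
    exact h.T_mono.le_iff_le.1 h1
  refine ⟨x, ⟨m + n, ?_⟩, ?_⟩
  · rw [abs_le]; push_cast
    constructor <;> linarith
  · rw [hx, sub_self]; exact infml_zero

end Aux3


/-- The residue map T̄ (given on representatives a ∈ R_v by ā ↦ T(a)‾) is a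
well-defined transexponential on the residue field K̄ compatible with ē:
(K̄, ē, T̄) is an ordered transexponential field.  All residue-field conditions
are expressed via representatives, equality in K̄ being `IsInfml` of the
difference of representatives. -/
theorem stmt_11 {K : Type*} [Field K] [LinearOrder K] [IsStrictOrderedRing K] (e T : K → K)
    (hKT : IsOTF e T) (nonarch : ∃ z : K, ∀ n : ℕ, (n : K) < z) :
    -- T̄ is well defined
    (∀ a b : K, IsFinElt a → IsFinElt b → IsInfml (a - b) → IsInfml (T a - T b)) ∧
    -- T̄ maps K̄ into K̄^{>0}
    (∀ a : K, IsFinElt a → IsFinElt (T a) ∧ 0 < T a ∧ ¬ IsInfml (T a)) ∧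
    -- T̄ is order-preserving (hence injective)
    (∀ a b : K, IsFinElt a → IsFinElt b → a < b → ¬ IsInfml (b - a) →
      T a < T b ∧ ¬ IsInfml (T b - T a)) ∧
    -- T̄ is surjective onto K̄^{>0}
    (∀ c : K, IsFinElt c → 0 < c → ¬ IsInfml c →
      ∃ a : K, IsFinElt a ∧ IsInfml (T a - c)) ∧
    -- T̄ = ē on [0,1]
    (∀ a : K, IsFinElt a → 0 ≤ a → a ≤ 1 → IsInfml (T a - e a)) ∧
    -- T̄(x+1) = ē(T̄(x)) for x > 0
    (∀ a : K, IsFinElt a → 0 < a → ¬ IsInfml a → IsInfml (T (a + 1) - e (T a))) ∧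
    -- T̄(x)·T̄(−x) = 1 for x < 0
    (∀ a : K, IsFinElt a → a < 0 → ¬ IsInfml a → IsInfml (T a * T (-a) - 1)) := by
  refine ⟨?_, ?_, ?_, ?_, ?_, ?_, ?_⟩
  · -- well defined
    intro a b hfa hfb hinf
    rcases le_total a b with hab | hab
    · have hba : IsInfml (b - a) := infml_dom hinf (abs_sub_comm b a).le
      exact infml_dom (welldef_le hKT hfa hfb hab hba) (abs_sub_comm (T a) (T b)).le
    · exact welldef_le hKT hfb hfa hab hinf
  · exact part2 hKT
  · exact part3 hKT
  · exact part4 hKT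
  · intro a hfa h0 h1
    rw [hKT.T_eq_e a h0 h1, sub_self]; exact infml_zero
  · intro a hfa h0 hni
    rw [hKT.T_succ a h0, sub_self]; exact infml_zero
  · intro a hfa h0 hni
    rw [hKT.T_neg a h0, sub_self]; exact infml_zero
end

section
/- Let (K,e,T) be an ordered transexponential field, with m ∈ ℕ ∪ {0}, and assume e' = e. Then for every x in the interval [m, m+1] of K, T is differentiable at x with T'(x) = e(x−m) · ∏_{i=1}^{m} e(T(x−i)). In particular T is continuously differentiable on the valuation ring R_v. -/
/-- First-order ε–δ differentiability: f has derivative b at a. -/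
def HasDerivAtOF {K : Type*} [Field K] [LinearOrder K] [IsStrictOrderedRing K] (f : K → K) (a b : K) : Prop :=
  ∀ ε : K, 0 < ε → ∃ δ : K, 0 < δ ∧ ∀ h : K, 0 < |h| → |h| < δ →
    |(f (a + h) - f a) / h - b| < ε

/-- First-order ε–δ continuity of g at x. -/
def ContinuousAtOF {K : Type*} [Field K] [LinearOrder K] [IsStrictOrderedRing K] (g : K → K) (x : K) : Prop :=
  ∀ ε : K, 0 < ε → ∃ δ : K, 0 < δ ∧ ∀ y : K, |y - x| < δ → |g y - g x| < ε

section Tool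
variable {K : Type*} [Field K] [LinearOrder K] [IsStrictOrderedRing K]

private lemma absdiv (A b h ε : K) (hh : h ≠ 0) :
    |A / h - b| < ε ↔ |A - b * h| < ε * |h| := by
  rw [show A / h - b = (A - b * h) / h by field_simp, abs_div,
    div_lt_iff₀ (abs_pos.mpr hh)]

private lemma derivOF_id (a : K) : HasDerivAtOF (fun y => y) a 1 := by
  intro ε hε
  refine ⟨1, one_pos, fun h h1 _ => ?_⟩
  have hh : h ≠ 0 := by rwa [← abs_pos]
  have : (a + h - a) / h - 1 = 0 := by field_simp; ring
  rw [this, abs_zero]; exact hε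

private lemma derivOF_subC (c a : K) : HasDerivAtOF (fun y => y - c) a 1 := by
  intro ε hε
  refine ⟨1, one_pos, fun h h1 _ => ?_⟩
  have hh : h ≠ 0 := by rwa [← abs_pos]
  have : (a + h - c - (a - c)) / h - 1 = 0 := by field_simp; ring
  rw [this, abs_zero]; exact hε

private lemma derivOF_negsubC (c a : K) : HasDerivAtOF (fun y => -y - c) a (-1) := by
  intro ε hε
  refine ⟨1, one_pos, fun h h1 _ => ?_⟩
  have hh : h ≠ 0 := by rwa [← abs_pos]
  have : (-(a + h) - c - (-a - c)) / h - (-1) = 0 := by field_simp; ring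
  rw [this, abs_zero]; exact hε

private lemma derivOF_comp {f g : K → K} {a b c : K}
    (hg : HasDerivAtOF g a b) (hf : HasDerivAtOF f (g a) c) :
    HasDerivAtOF (fun y => f (g y)) a (c * b) := by
  intro ε hε
  have hB : (0:K) < |b| + 1 := by positivity
  have hC : (0:K) < |c| + 1 := by positivity
  obtain ⟨δ₂, hδ₂, H₂⟩ := hf (ε / (2 * (|b| + 1))) (by positivity)
  obtain ⟨δ₁, hδ₁, H₁⟩ := hg (min 1 (ε / (4 * (|c| + 1)))) (by positivity)
  refine ⟨min δ₁ (δ₂ / (|b| + 1)), by positivity, fun h h1 h2 => ?_⟩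
  have hh : h ≠ 0 := by rwa [← abs_pos]
  obtain ⟨k, hk⟩ : ∃ k : K, k = g (a + h) - g a := ⟨_, rfl⟩
  have hga : g (a + h) = g a + k := by rw [hk]; ring
  have hgb : |k - b * h| < min 1 (ε / (4 * (|c| + 1))) * |h| := by
    have := H₁ h h1 (lt_of_lt_of_le h2 (min_le_left _ _))
    rw [absdiv _ _ _ _ hh] at this
    rwa [hk]
  have hgb1 : |k - b * h| < 1 * |h| := by
    have hm : min 1 (ε / (4 * (|c| + 1))) * |h| ≤ 1 * |h| :=
      mul_le_mul_of_nonneg_right (min_le_left _ _) (abs_nonneg h)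
    linarith
  have hgb2 : |k - b * h| ≤ ε / (4 * (|c| + 1)) * |h| := by
    have hm : min 1 (ε / (4 * (|c| + 1))) * |h| ≤ ε / (4 * (|c| + 1)) * |h| :=
      mul_le_mul_of_nonneg_right (min_le_right _ _) (abs_nonneg h)
    linarith
  have hk1 : |k| ≤ (|b| + 1) * |h| := by
    have t1 : |k| ≤ |k - b * h| + |b * h| := by
      calc |k| = |(k - b * h) + b * h| := by congr 1; ring
        _ ≤ |k - b * h| + |b * h| := abs_add_le _ _
    rw [abs_mul] at t1
    have : (|b| + 1) * |h| = |b| * |h| + 1 * |h| := by ring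
    linarith
  have hksmall : |k| < δ₂ := by
    have h2' : |h| < δ₂ / (|b| + 1) := lt_of_lt_of_le h2 (min_le_right _ _)
    calc |k| ≤ (|b| + 1) * |h| := hk1
      _ < (|b| + 1) * (δ₂ / (|b| + 1)) := mul_lt_mul_of_pos_left h2' hB
      _ = δ₂ := by field_simp
  have hf' : |f (g a + k) - f (g a) - c * k| ≤ ε / (2 * (|b| + 1)) * |k| := by
    rcases eq_or_ne k 0 with h0 | h0
    · simp [h0]
    · have := H₂ k (abs_pos.mpr h0) hksmall
      rw [absdiv _ _ _ _ h0] at this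
      exact this.le
  show |(f (g (a + h)) - f (g a)) / h - c * b| < ε
  rw [absdiv _ _ _ _ hh, hga]
  have key : f (g a + k) - f (g a) - c * b * h
      = (f (g a + k) - f (g a) - c * k) + c * (k - b * h) := by ring
  have t2 : |f (g a + k) - f (g a) - c * b * h|
      ≤ |f (g a + k) - f (g a) - c * k| + |c| * |k - b * h| := by
    rw [key]
    exact (abs_add_le _ _).trans (by rw [abs_mul])
  have e1 : ε / (2 * (|b| + 1)) * |k| ≤ ε / (2 * (|b| + 1)) * ((|b| + 1) * |h|) :=
    mul_le_mul_of_nonneg_left hk1 (by positivity)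
  have e1' : ε / (2 * (|b| + 1)) * ((|b| + 1) * |h|) = ε / 2 * |h| := by
    field_simp
  have e2 : |c| * |k - b * h| ≤ (|c| + 1) * (ε / (4 * (|c| + 1)) * |h|) :=
    mul_le_mul (by linarith) hgb2 (abs_nonneg _) (by positivity)
  have e2' : (|c| + 1) * (ε / (4 * (|c| + 1)) * |h|) = ε / 4 * |h| := by
    field_simp
  have hq : (0:K) < ε / 4 * |h| := by positivity
  linarith

private lemma derivOF_congr {f g : K → K} {a b δ₀ : K} (hδ₀ : 0 < δ₀)
    (hfg : ∀ y, |y - a| < δ₀ → f y = g y) (hg : HasDerivAtOF g a b) :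
    HasDerivAtOF f a b := by
  intro ε hε
  obtain ⟨δ, hδ, H⟩ := hg ε hε
  refine ⟨min δ δ₀, by positivity, fun h h1 h2 => ?_⟩
  have hb : |a + h - a| < δ₀ := by
    rw [add_sub_cancel_left]; exact lt_of_lt_of_le h2 (min_le_right _ _)
  rw [hfg (a + h) hb, hfg a (by simpa using hδ₀)]
  exact H h h1 (lt_of_lt_of_le h2 (min_le_left _ _))

private lemma derivOF_glue {f f₁ f₂ : K → K} {a b δ₀ : K} (hδ₀ : 0 < δ₀)
    (h₁ : HasDerivAtOF f₁ a b) (h₂ : HasDerivAtOF f₂ a b)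
    (hR : ∀ y, |y - a| < δ₀ → a ≤ y → f y = f₁ y)
    (hL : ∀ y, |y - a| < δ₀ → y ≤ a → f y = f₂ y) :
    HasDerivAtOF f a b := by
  intro ε hε
  obtain ⟨δ₁, hδ₁, H₁⟩ := h₁ ε hε
  obtain ⟨δ₂, hδ₂, H₂⟩ := h₂ ε hε
  refine ⟨min δ₀ (min δ₁ δ₂), by positivity, fun h h1 h2 => ?_⟩
  have hball : |a + h - a| < δ₀ := by
    rw [add_sub_cancel_left]; exact lt_of_lt_of_le h2 (min_le_left _ _)
  have ha0 : |a - a| < δ₀ := by simpa using hδ₀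
  rcases le_or_gt 0 h with hpos | hneg
  · rw [hR (a + h) hball (by linarith), hR a ha0 le_rfl]
    exact H₁ h h1 (lt_of_lt_of_le h2 ((min_le_right _ _).trans (min_le_left _ _)))
  · rw [hL (a + h) hball (by linarith), hL a ha0 le_rfl]
    exact H₂ h h1 (lt_of_lt_of_le h2 ((min_le_right _ _).trans (min_le_right _ _)))

private lemma derivOF_unique {f : K → K} {a b b' : K}
    (h : HasDerivAtOF f a b) (h' : HasDerivAtOF f a b') : b = b' := by
  by_contra hne
  have hε0 : 0 < |b - b'| / 2 := by
    have : b - b' ≠ 0 := sub_ne_zero.mpr hne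
    positivity
  obtain ⟨δ, hδ, H⟩ := h (|b - b'| / 2) hε0
  obtain ⟨δ', hδ', H'⟩ := h' (|b - b'| / 2) hε0
  set h0 := min δ δ' / 2 with hh0
  have hpos : 0 < h0 := by positivity
  have habs : |h0| = h0 := abs_of_pos hpos
  have hlt : h0 < min δ δ' := by rw [hh0]; exact half_lt_self (lt_min hδ hδ')
  have e1 := H h0 (by rw [habs]; exact hpos) (by rw [habs]; exact hlt.trans_le (min_le_left _ _))
  have e2 := H' h0 (by rw [habs]; exact hpos) (by rw [habs]; exact hlt.trans_le (min_le_right _ _))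
  set q := (f (a + h0) - f a) / h0
  have : |b - b'| ≤ |q - b| + |q - b'| := by
    calc |b - b'| = |(q - b') - (q - b)| := by congr 1; ring
      _ ≤ |q - b'| + |q - b| := abs_sub _ _
      _ = |q - b| + |q - b'| := by ring
  linarith

private lemma derivOF_cont {f : K → K} {a b : K} (h : HasDerivAtOF f a b) :
    ContinuousAtOF f a := by
  intro ε hε
  obtain ⟨δ, hδ, H⟩ := h 1 one_pos
  refine ⟨min δ (ε / (|b| + 1)), by positivity, fun y hy => ?_⟩
  rcases eq_or_ne y a with rfl | hne
  · simpa using hε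
  · have hya : y - a ≠ 0 := sub_ne_zero.mpr hne
    have h1 := H (y - a) (abs_pos.mpr hya) (lt_of_lt_of_le hy (min_le_left _ _))
    rw [add_sub_cancel] at h1
    rw [absdiv _ _ _ _ hya, one_mul] at h1
    have h2 : |f y - f a| ≤ |f y - f a - b * (y - a)| + |b| * |y - a| := by
      calc |f y - f a| = |(f y - f a - b * (y - a)) + b * (y - a)| := by ring_nf
        _ ≤ _ := (abs_add_le _ _).trans (by rw [abs_mul])
    have h3 : |y - a| < ε / (|b| + 1) := lt_of_lt_of_le hy (min_le_right _ _)
    have hb1 : (0:K) < |b| + 1 := by positivity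
    have : (|b| + 1) * |y - a| < (|b| + 1) * (ε / (|b| + 1)) := mul_lt_mul_of_pos_left h3 hb1
    rw [mul_div_cancel₀ _ hb1.ne'] at this
    nlinarith [abs_nonneg b, abs_nonneg (y - a)]

private lemma derivOF_inv {c : K} (hc : c ≠ 0) :
    HasDerivAtOF (fun t => t⁻¹) c (-((c ^ 2)⁻¹)) := by
  intro ε hε
  have hc0 : (0:K) < |c| := abs_pos.mpr hc
  refine ⟨min (|c| / 2) (ε * |c| ^ 3 / 2), by positivity, fun h h1 h2 => ?_⟩
  have hh : h ≠ 0 := by rwa [← abs_pos]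
  have hhalf : |h| < |c| / 2 := lt_of_lt_of_le h2 (min_le_left _ _)
  have hch : |c + h| ≥ |c| / 2 := by
    have t := abs_sub_abs_le_abs_sub c (c + h)
    rw [show c - (c + h) = -h by ring, abs_neg] at t
    linarith
  have hch0 : c + h ≠ 0 := by
    intro h0
    rw [h0, abs_zero] at hch; linarith
  have key : ((c + h)⁻¹ - c⁻¹) / h - (-((c ^ 2)⁻¹)) = h / (c ^ 2 * (c + h)) := by
    field_simp
    ring
  rw [key, abs_div]
  rw [div_lt_iff₀ (by positivity : (0:K) < |c ^ 2 * (c + h)|)]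
  have habs : |c ^ 2 * (c + h)| = |c| ^ 2 * |c + h| := by
    rw [abs_mul, abs_pow]
  rw [habs]
  have h3 : |h| < ε * |c| ^ 3 / 2 := lt_of_lt_of_le h2 (min_le_right _ _)
  have h4 : ε * (|c| ^ 2 * (|c| / 2)) ≤ ε * (|c| ^ 2 * |c + h|) :=
    mul_le_mul_of_nonneg_left (mul_le_mul_of_nonneg_left hch (by positivity)) hε.le
  have h5 : ε * (|c| ^ 2 * (|c| / 2)) = ε * |c| ^ 3 / 2 := by ring
  linarith

private lemma contOF_comp {f g : K → K} {x : K}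
    (hg : ContinuousAtOF g x) (hf : ContinuousAtOF f (g x)) :
    ContinuousAtOF (fun y => f (g y)) x := by
  intro ε hε
  obtain ⟨δf, hδf, Hf⟩ := hf ε hε
  obtain ⟨δg, hδg, Hg⟩ := hg δf hδf
  exact ⟨δg, hδg, fun y hy => Hf _ (Hg y hy)⟩

private lemma contOF_mul {f g : K → K} {x : K}
    (hf : ContinuousAtOF f x) (hg : ContinuousAtOF g x) :
    ContinuousAtOF (fun y => f y * g y) x := by
  intro ε hε
  have hM : (0:K) < |f x| + |g x| + 1 := by positivity
  set M := |f x| + |g x| + 1 with hMdef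
  obtain ⟨δ₁, hδ₁, H₁⟩ := hf (min 1 (ε / (2 * M))) (by positivity)
  obtain ⟨δ₂, hδ₂, H₂⟩ := hg (ε / (2 * M)) (by positivity)
  refine ⟨min δ₁ δ₂, by positivity, fun y hy => ?_⟩
  have c₁ := H₁ y (lt_of_lt_of_le hy (min_le_left _ _))
  have c₂ := H₂ y (lt_of_lt_of_le hy (min_le_right _ _))
  have hfy : |f y| ≤ M := by
    have : |f y| ≤ |f y - f x| + |f x| := by
      calc |f y| = |(f y - f x) + f x| := by ring_nf
        _ ≤ _ := abs_add_le _ _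
    have : |f y - f x| < 1 := lt_of_lt_of_le c₁ (min_le_left _ _)
    have := abs_nonneg (g x)
    -- |f y| ≤ |f y - f x| + |f x| < 1 + |f x| ≤ M
    nlinarith [abs_nonneg (f x), abs_nonneg (f y),
      (calc |f y| = |(f y - f x) + f x| := by ring_nf
        _ ≤ |f y - f x| + |f x| := abs_add_le _ _)]
  have c₁' : |f y - f x| < ε / (2 * M) := lt_of_lt_of_le c₁ (min_le_right _ _)
  have expand : f y * g y - f x * g x = f y * (g y - g x) + g x * (f y - f x) := by ring
  calc |f y * g y - f x * g x|
      ≤ |f y| * |g y - g x| + |g x| * |f y - f x| := by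
        rw [expand]
        exact (abs_add_le _ _).trans (by rw [abs_mul, abs_mul])
    _ ≤ M * |g y - g x| + M * |f y - f x| := by
        have := abs_nonneg (g y - g x); have := abs_nonneg (f y - f x)
        have hgxM : |g x| ≤ M := by simp [hMdef]; nlinarith [abs_nonneg (f x)]
        nlinarith [abs_nonneg (g x)]
    _ < M * (ε / (2 * M)) + M * (ε / (2 * M)) := by
        have := mul_lt_mul_of_pos_left c₂ hM
        have := mul_lt_mul_of_pos_left c₁' hM
        linarith
    _ = ε := by field_simp; ring

private lemma contOF_inv {g : K → K} {x : K}
    (hg : ContinuousAtOF g x) (hx : g x ≠ 0) :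
    ContinuousAtOF (fun y => (g y)⁻¹) x := by
  intro ε hε
  have hgx : (0:K) < |g x| := abs_pos.mpr hx
  obtain ⟨δ, hδ, H⟩ := hg (min (|g x| / 2) (ε * |g x| ^ 2 / 2)) (by positivity)
  refine ⟨δ, hδ, fun y hy => ?_⟩
  have h1 := H y hy
  have h1a : |g y - g x| < |g x| / 2 := lt_of_lt_of_le h1 (min_le_left _ _)
  have h1b : |g y - g x| < ε * |g x| ^ 2 / 2 := lt_of_lt_of_le h1 (min_le_right _ _)
  have hgy : |g y| ≥ |g x| / 2 := by
    have t := abs_sub_abs_le_abs_sub (g x) (g y)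
    rw [abs_sub_comm] at t
    linarith
  have hgy0 : g y ≠ 0 := by
    intro h0; rw [h0, abs_zero] at hgy; linarith
  have key : (g y)⁻¹ - (g x)⁻¹ = (g x - g y) / (g y * g x) := by
    field_simp
  rw [key, abs_div, div_lt_iff₀ (by positivity : (0:K) < |g y * g x|)]
  rw [abs_mul, abs_sub_comm]
  have h5 : ε * (|g y| * |g x|) ≥ ε * ((|g x| / 2) * |g x|) :=
    mul_le_mul_of_nonneg_left (mul_le_mul_of_nonneg_right hgy (abs_nonneg _)) hε.le
  have h6 : ε * ((|g x| / 2) * |g x|) = ε * |g x| ^ 2 / 2 := by ring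
  linarith

private lemma contOF_congr_fun {f g : K → K} {x : K} (h : ∀ y, f y = g y)
    (hg : ContinuousAtOF g x) : ContinuousAtOF f x := by
  have : f = g := funext h
  rwa [this]

private lemma contOF_sub_const (c x : K) : ContinuousAtOF (fun y => y - c) x := by
  intro ε hε
  exact ⟨ε, hε, fun y hy => by simpa using hy⟩

private lemma contOF_neg_sub (c x : K) : ContinuousAtOF (fun y => -y - c) x := by
  intro ε hε
  refine ⟨ε, hε, fun y hy => ?_⟩
  have : -y - c - (-x - c) = -(y - x) := by ring
  rw [this, abs_neg]; exact hy

private lemma contOF_glue {D g₁ g₂ : K → K} {x δ₀ : K} (hδ₀ : 0 < δ₀)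
    (h₁ : ContinuousAtOF g₁ x) (h₂ : ContinuousAtOF g₂ x)
    (hR : ∀ y, |y - x| < δ₀ → x ≤ y → D y = g₁ y)
    (hL : ∀ y, |y - x| < δ₀ → y ≤ x → D y = g₂ y) :
    ContinuousAtOF D x := by
  intro ε hε
  obtain ⟨δ₁, hδ₁, H₁⟩ := h₁ ε hε
  obtain ⟨δ₂, hδ₂, H₂⟩ := h₂ ε hε
  refine ⟨min δ₀ (min δ₁ δ₂), by positivity, fun y hy => ?_⟩
  have hx0 : |x - x| < δ₀ := by simpa using hδ₀
  rcases le_or_gt x y with hxy | hxy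
  · rw [hR y (lt_of_lt_of_le hy (min_le_left _ _)) hxy, hR x hx0 le_rfl]
    exact H₁ y (lt_of_lt_of_le hy ((min_le_right _ _).trans (min_le_left _ _)))
  · rw [hL y (lt_of_lt_of_le hy (min_le_left _ _)) hxy.le, hL x hx0 le_rfl]
    exact H₂ y (lt_of_lt_of_le hy ((min_le_right _ _).trans (min_le_right _ _)))

end Tool

section Main
variable {K : Type*} [Field K] [LinearOrder K] [IsStrictOrderedRing K] {e T : K → K}

private def PP (e : K → K) (n : ℕ) (t : K) : K := ∏ k ∈ Finset.range n, e (e^[k] t)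

private lemma dIter (he : ∀ y : K, HasDerivAtOF e y (e y)) :
    ∀ (n : ℕ) (t : K), HasDerivAtOF (fun s => e^[n] s) t (PP e n t) := by
  intro n
  induction n with
  | zero =>
    intro t
    have : PP e 0 t = 1 := by simp [PP]
    rw [this]
    exact derivOF_id t
  | succ n ih =>
    intro t
    have h2 : (fun s : K => e^[n+1] s) = fun s => e (e^[n] s) := by
      funext s; rw [Function.iterate_succ_apply']
    have h3 : PP e (n+1) t = e (e^[n] t) * PP e n t := by
      rw [PP, PP, Finset.prod_range_succ, mul_comm]
    rw [h2, h3]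
    exact derivOF_comp (ih t) (he _)

private lemma dShift (he : ∀ y : K, HasDerivAtOF e y (e y)) (k : ℕ) (c a : K) :
    HasDerivAtOF (fun y => e^[k] (y - c)) a (PP e k (a - c)) := by
  have := derivOF_comp (derivOF_subC c a) (dIter he k (a - c))
  simpa using this

private lemma iterpos (hKT : IsOTF e T) (k : ℕ) (t : K) : 0 < e^[k+1] t := by
  rw [Function.iterate_succ_apply']
  exact hKT.e_pos _

private lemma dInvShiftNeg (hKT : IsOTF e T) (he : ∀ y : K, HasDerivAtOF e y (e y))
    (k : ℕ) (c a : K) :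
    HasDerivAtOF (fun y => (e^[k+1] (-y - c))⁻¹) a
      (PP e (k+1) (-a - c) * ((e^[k+1] (-a - c)) ^ 2)⁻¹) := by
  have h0 : e^[k+1] (-a - c) ≠ 0 := (iterpos hKT k _).ne'
  have hinner : HasDerivAtOF (fun y => e^[k+1] (-y - c)) a (PP e (k+1) (-a - c) * (-1)) :=
    derivOF_comp (derivOF_negsubC c a) (dIter he (k+1) (-a - c))
  have := derivOF_comp hinner (derivOF_inv h0)
  convert this using 1
  ring

private lemma e_zero (hKT : IsOTF e T) : e 0 = 1 := by
  have h := hKT.e_add 0 0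
  simp only [add_zero] at h
  have hp := hKT.e_pos 0
  have : e 0 * 1 = e 0 * e 0 := by rw [mul_one]; exact h
  exact (mul_left_cancel₀ hp.ne' this).symm

private lemma PP_shift (hKT : IsOTF e T) (n : ℕ) : PP e (n+1) 0 = PP e n 1 := by
  rw [PP, PP, Finset.prod_range_succ']
  have h1 : ∀ k, e^[k+1] (0:K) = e^[k] 1 := by
    intro k; rw [Function.iterate_succ_apply, e_zero hKT]
  simp only [h1, Function.iterate_zero_apply, e_zero hKT, mul_one]

private lemma iter_shift (hKT : IsOTF e T) (n : ℕ) : e^[n+1] (0:K) = e^[n] 1 := by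
  rw [Function.iterate_succ_apply, e_zero hKT]

private lemma Tee (hKT : IsOTF e T) : ∀ y : K, |y| ≤ 1 → T y = e y := by
  intro y hy
  rw [abs_le] at hy
  rcases le_or_gt 0 y with h | h
  · exact hKT.T_eq_e y h hy.2
  · have h1 := hKT.T_neg y h
    have h2 : T (-y) = e (-y) := hKT.T_eq_e (-y) (by linarith) (by linarith)
    have h3 : e y * e (-y) = 1 := by rw [← hKT.e_add]; simpa using e_zero hKT
    have h4 : e (-y) ≠ 0 := (hKT.e_pos _).ne'
    have h5 : T y * e (-y) = e y * e (-y) := by rw [h3, ← h2]; exact h1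
    exact mul_right_cancel₀ h4 h5

private lemma T_on (hKT : IsOTF e T) :
    ∀ (m : ℕ) (x : K), (m : K) ≤ x → x ≤ (m : K) + 1 → T x = e^[m+1] (x - m) := by
  intro m
  induction m with
  | zero =>
    intro x h1 h2
    push_cast at h1 h2
    rw [Function.iterate_one]
    rw [show x - (0:ℕ) = x by push_cast; ring]
    exact hKT.T_eq_e x h1 (by linarith)
  | succ m ih =>
    intro x h1 h2
    push_cast at h1 h2
    rcases lt_or_ge 1 x with hx | hx
    · have hx1 : T x = e (T (x - 1)) := by
        have := hKT.T_succ (x - 1) (by linarith)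
        rw [sub_add_cancel] at this
        exact this
      have harg : x - 1 - (m:K) = x - (((m+1):ℕ):K) := by push_cast; ring
      rw [hx1, ih (x - 1) (by linarith) (by linarith), harg,
        Function.iterate_succ_apply' e (m+1) (x - (((m+1):ℕ):K))]
    · have hm : (m : K) + 1 ≤ 1 := le_trans h1 hx
      have hm' : (m : K) ≤ 0 := by linarith
      have hm0 : m = 0 := by exact_mod_cast le_antisymm hm' (by positivity)
      subst hm0
      have hx1 : x = 1 := le_antisymm hx (by simpa using h1)
      subst hx1
      rw [hKT.T_eq_e 1 zero_le_one le_rfl]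
      show e 1 = e^[2] (1 - (0+1 : ℕ))
      rw [show ((1:K) - ((0+1 : ℕ):K)) = 0 by push_cast; ring]
      show e 1 = e (e 0)
      rw [e_zero hKT]

private lemma T_on_neg (hKT : IsOTF e T) :
    ∀ (m : ℕ) (x : K), -((m : K) + 1) ≤ x → x ≤ -(m : K) →
      T x = (e^[m+1] (-x - m))⁻¹ := by
  intro m x h1 h2
  rcases lt_or_ge x 0 with hx | hx
  · have hTnx : T (-x) = e^[m+1] (-x - m) := T_on hKT m (-x) (by linarith) (by linarith)
    have h3 := hKT.T_neg x hx
    rw [hTnx] at h3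
    exact eq_inv_of_mul_eq_one_left h3
  · have hx0 : x = 0 := le_antisymm (by linarith [h2, (by positivity : (0:K) ≤ (m:K))]) hx
    subst hx0
    have hm0 : m = 0 := by
      have : (m:K) ≤ 0 := by linarith [h2]
      exact_mod_cast le_antisymm this (by positivity)
    subst hm0
    rw [show (-(0:K) - (0:ℕ)) = 0 by push_cast; ring]
    rw [Function.iterate_one, e_zero hKT, inv_one]
    rw [hKT.T_eq_e 0 le_rfl zero_le_one, e_zero hKT]

end Main

section Main2
variable {K : Type*} [Field K] [LinearOrder K] [IsStrictOrderedRing K] {e T : K → K}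

private lemma deriv_pos_interior (hKT : IsOTF e T) (he : ∀ y : K, HasDerivAtOF e y (e y))
    (m : ℕ) (x : K) (h1 : (m:K) < x) (h2 : x < (m:K) + 1) :
    HasDerivAtOF T x (PP e (m+1) (x - m)) := by
  refine derivOF_congr (δ₀ := min (x - (m:K)) ((m:K) + 1 - x))
    (lt_min (by linarith) (by linarith)) ?_ (dShift he (m+1) (m:K) x)
  intro y hy
  rw [abs_lt] at hy
  have hm1 : min (x - (m:K)) ((m:K) + 1 - x) ≤ x - (m:K) := min_le_left _ _
  have hm2 : min (x - (m:K)) ((m:K) + 1 - x) ≤ (m:K) + 1 - x := min_le_right _ _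
  exact T_on hKT m y (by linarith) (by linarith)

private lemma deriv_at_posint (hKT : IsOTF e T) (he : ∀ y : K, HasDerivAtOF e y (e y))
    (n : ℕ) : HasDerivAtOF T ((n:K)+1) (PP e (n+2) 0) := by
  have h₁ : HasDerivAtOF (fun y => e^[n+2] (y - ((n:K)+1))) ((n:K)+1) (PP e (n+2) 0) := by
    have := dShift he (n+2) ((n:K)+1) ((n:K)+1)
    rwa [sub_self] at this
  have h₂ : HasDerivAtOF (fun y => e^[n+1] (y - (n:K))) ((n:K)+1) (PP e (n+2) 0) := by
    have := dShift he (n+1) (n:K) ((n:K)+1)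
    rw [show ((n:K) + 1 - (n:K)) = 1 by ring] at this
    rwa [PP_shift hKT (n+1)]
  refine derivOF_glue one_pos h₁ h₂ ?_ ?_
  · intro y hy hxy
    rw [abs_lt] at hy
    have := T_on hKT (n+1) y (by push_cast; linarith) (by push_cast; linarith)
    push_cast at this
    exact this
  · intro y hy hxy
    rw [abs_lt] at hy
    exact T_on hKT n y (by linarith) (by linarith)

private lemma main_pos (hKT : IsOTF e T) (he : ∀ y : K, HasDerivAtOF e y (e y)) :
    ∀ (m : ℕ) (x : K), (m:K) ≤ x → x ≤ (m:K) + 1 →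
      HasDerivAtOF T x (PP e (m+1) (x - m)) := by
  intro m x h1 h2
  rcases eq_or_lt_of_le h1 with heq | hlt
  · cases m with
    | zero =>
      have h0 : HasDerivAtOF T 0 (e 0) :=
        derivOF_congr one_pos
          (fun y hy => Tee hKT y (by rw [sub_zero] at hy; exact hy.le)) (he 0)
      rw [← heq]
      rw [show (((0:ℕ):K) - ((0:ℕ):K)) = 0 by simp]
      rw [show PP e 1 (0:K) = e 0 by simp [PP]]
      simpa using h0
    | succ k =>
      have hx : x = (k:K) + 1 := by rw [← heq]; push_cast; ring
      rw [hx, show (((k:K) + 1) - ((k+1:ℕ):K)) = 0 by push_cast; ring]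
      exact deriv_at_posint hKT he k
  · rcases eq_or_lt_of_le h2 with heq2 | hlt2
    · rw [heq2, show ((m:K) + 1 - (m:K)) = 1 by ring, ← PP_shift hKT (m+1)]
      exact deriv_at_posint hKT he m
    · exact deriv_pos_interior hKT he m x hlt hlt2

private lemma deriv_neg_interior (hKT : IsOTF e T) (he : ∀ y : K, HasDerivAtOF e y (e y))
    (m : ℕ) (x : K) (h1 : -((m:K)+1) < x) (h2 : x < -(m:K)) :
    HasDerivAtOF T x (PP e (m+1) (-x - m) * ((e^[m+1] (-x - m)) ^ 2)⁻¹) := by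
  refine derivOF_congr (δ₀ := min (-(m:K) - x) (x + (m:K) + 1))
    (lt_min (by linarith) (by linarith)) ?_ (dInvShiftNeg hKT he m (m:K) x)
  intro y hy
  rw [abs_lt] at hy
  have hm1 : min (-(m:K) - x) (x + (m:K) + 1) ≤ -(m:K) - x := min_le_left _ _
  have hm2 : min (-(m:K) - x) (x + (m:K) + 1) ≤ x + (m:K) + 1 := min_le_right _ _
  exact T_on_neg hKT m y (by linarith) (by linarith)

private lemma deriv_at_negint (hKT : IsOTF e T) (he : ∀ y : K, HasDerivAtOF e y (e y))
    (n : ℕ) : HasDerivAtOF T (-((n:K)+1)) (PP e (n+2) 0 * ((e^[n+2] (0:K)) ^ 2)⁻¹) := by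
  have h₂ : HasDerivAtOF (fun y => (e^[n+2] (-y - ((n:K)+1)))⁻¹) (-((n:K)+1))
      (PP e (n+2) 0 * ((e^[n+2] (0:K)) ^ 2)⁻¹) := by
    have := dInvShiftNeg hKT he (n+1) ((n:K)+1) (-((n:K)+1))
    rwa [show (-(-((n:K)+1)) - ((n:K)+1)) = 0 by ring] at this
  have h₁ : HasDerivAtOF (fun y => (e^[n+1] (-y - (n:K)))⁻¹) (-((n:K)+1))
      (PP e (n+2) 0 * ((e^[n+2] (0:K)) ^ 2)⁻¹) := by
    have := dInvShiftNeg hKT he n (n:K) (-((n:K)+1))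
    rw [show (-(-((n:K)+1)) - (n:K)) = 1 by ring] at this
    rwa [PP_shift hKT (n+1), iter_shift hKT (n+1)]
  refine derivOF_glue one_pos h₁ h₂ ?_ ?_
  · intro y hy hxy
    rw [abs_lt] at hy
    exact T_on_neg hKT n y (by linarith) (by linarith)
  · intro y hy hxy
    rw [abs_lt] at hy
    have := T_on_neg hKT (n+1) y (by push_cast; linarith) (by push_cast; linarith)
    push_cast at this
    exact this

private lemma main_neg (hKT : IsOTF e T) (he : ∀ y : K, HasDerivAtOF e y (e y)) :
    ∀ (m : ℕ) (x : K), -((m:K)+1) ≤ x → x ≤ -(m:K) →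
      HasDerivAtOF T x (PP e (m+1) (-x - m) * ((e^[m+1] (-x - m)) ^ 2)⁻¹) := by
  intro m x h1 h2
  rcases eq_or_lt_of_le h2 with heq | hlt
  · cases m with
    | zero =>
      have h0 : HasDerivAtOF T 0 (e 0) :=
        derivOF_congr one_pos
          (fun y hy => Tee hKT y (by rw [sub_zero] at hy; exact hy.le)) (he 0)
      have hx : x = 0 := by rw [heq]; simp
      rw [hx, show (-(0:K) - ((0:ℕ):K)) = 0 by simp]
      rw [show (PP e 1 (0:K) * ((e^[1] (0:K)) ^ 2)⁻¹) = e 0 by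
        simp [PP, e_zero hKT]]
      exact h0
    | succ k =>
      have hx : x = -((k:K) + 1) := by rw [heq]; push_cast; ring
      rw [hx, show (-(-((k:K)+1)) - ((k+1:ℕ):K)) = 0 by push_cast; ring]
      exact deriv_at_negint hKT he k
  · rcases eq_or_lt_of_le h1 with heq1 | hlt1
    · rw [← heq1, show (-(-((m:K)+1)) - (m:K)) = 1 by ring,
        ← PP_shift hKT (m+1), ← iter_shift hKT (m+1)]
      exact deriv_at_negint hKT he m
    · exact deriv_neg_interior hKT he m x hlt1 hlt

private lemma cont_PP (he : ∀ y : K, HasDerivAtOF e y (e y)) :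
    ∀ (n : ℕ) (x : K), ContinuousAtOF (PP e n) x := by
  intro n
  induction n with
  | zero =>
    intro x ε hε
    exact ⟨1, one_pos, fun y _ => by simpa [PP] using hε⟩
  | succ n ih =>
    intro x
    have h1 : ContinuousAtOF (fun y => PP e n y * e (e^[n] y)) x :=
      contOF_mul (ih x) (derivOF_cont (derivOF_comp (dIter he n x) (he _)))
    exact contOF_congr_fun (fun y => by simp [PP, Finset.prod_range_succ]) h1

private lemma cont_pos_formula (he : ∀ y : K, HasDerivAtOF e y (e y)) (m : ℕ) (c x : K) :
    ContinuousAtOF (fun y => PP e (m+1) (y - c)) x :=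
  contOF_comp (contOF_sub_const c x) (cont_PP he (m+1) (x - c))

private lemma cont_neg_formula (hKT : IsOTF e T) (he : ∀ y : K, HasDerivAtOF e y (e y))
    (m : ℕ) (c x : K) :
    ContinuousAtOF (fun y => PP e (m+1) (-y - c) * ((e^[m+1] (-y - c)) ^ 2)⁻¹) x := by
  have hg : ContinuousAtOF (fun y => e^[m+1] (-y - c)) x :=
    contOF_comp (contOF_neg_sub c x) (derivOF_cont (dIter he (m+1) (-x - c)))
  have hsq : ContinuousAtOF (fun y => (e^[m+1] (-y - c)) ^ 2) x :=
    contOF_congr_fun (fun y => by ring) (contOF_mul hg hg)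
  exact contOF_mul (contOF_comp (contOF_neg_sub c x) (cont_PP he (m+1) (-x - c)))
    (contOF_inv hsq (pow_ne_zero 2 (iterpos hKT m (-x - c)).ne'))

private lemma existsInterval :
    ∀ (n : ℕ) (x : K), 0 ≤ x → x ≤ n → ∃ m : ℕ, (m:K) ≤ x ∧ x ≤ (m:K) + 1 := by
  intro n
  induction n with
  | zero =>
    intro x h1 h2
    refine ⟨0, by simpa using h1, ?_⟩
    have : x ≤ 0 := by simpa using h2
    push_cast
    linarith
  | succ n ih =>
    intro x h1 h2
    rcases le_or_gt x n with h | h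
    · exact ih x h1 h
    · refine ⟨n, h.le, by push_cast at h2 ⊢; linarith⟩

end Main2

section Main3
variable {K : Type*} [Field K] [LinearOrder K] [IsStrictOrderedRing K] {e T : K → K}

private lemma formula_eq (hKT : IsOTF e T) (m : ℕ) (x : K)
    (h1 : (m:K) ≤ x) (h2 : x ≤ (m:K) + 1) :
    e (x - m) * ∏ i ∈ Finset.Icc 1 m, e (T (x - (i:K))) = PP e (m+1) (x - m) := by
  have step1 : ∏ i ∈ Finset.Icc 1 m, e (T (x - (i:K)))
      = ∏ j ∈ Finset.range m, e (T (x - ((1+j : ℕ):K))) := by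
    rw [← Finset.Ico_add_one_right_eq_Icc, Finset.prod_Ico_eq_prod_range]
    norm_num
  have step2 : ∀ j ∈ Finset.range m,
      e (T (x - ((1+j : ℕ):K))) = e (e^[m - j] (x - m)) := by
    intro j hj
    have hj' : j < m := Finset.mem_range.mp hj
    have hcast : ((m - 1 - j : ℕ) : K) = (m:K) - 1 - (j:K) := by
      have h' : m - 1 - j = m - (j+1) := by omega
      rw [h', Nat.cast_sub (by omega)]
      push_cast; ring
    have hb1 : ((m - 1 - j : ℕ) : K) ≤ x - ((1+j : ℕ):K) := by
      rw [hcast]; push_cast; linarith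
    have hb2 : x - ((1+j : ℕ):K) ≤ ((m - 1 - j : ℕ) : K) + 1 := by
      rw [hcast]; push_cast; linarith
    have hT := T_on hKT (m - 1 - j) (x - ((1+j : ℕ):K)) hb1 hb2
    rw [hT, show m - 1 - j + 1 = m - j by omega]
    congr 1
    rw [hcast]; push_cast; ring
  have step3 : ∏ j ∈ Finset.range m, e (e^[m - j] (x - (m:K)))
      = ∏ j ∈ Finset.range m, e (e^[j + 1] (x - (m:K))) := by
    have hrefl := Finset.prod_range_reflect (fun i => e (e^[i + 1] (x - (m:K)))) m
    rw [← hrefl]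
    apply Finset.prod_congr rfl
    intro j hj
    have hj' : j < m := Finset.mem_range.mp hj
    have : m - 1 - j + 1 = m - j := by omega
    simp only [this]
  rw [step1, Finset.prod_congr rfl step2, step3]
  rw [PP, Finset.prod_range_succ']
  simp only [Function.iterate_zero_apply]
  ring

end Main3


/-- If e' = e, then for every m ∈ ℕ ∪ {0} and every x ∈ [m, m+1]_K, T is
differentiable at x with T'(x) = e(x−m)·∏_{i=1}^{m} e(T(x−i)); in particular T
is continuously differentiable on the valuation ring R_v. -/
theorem stmt_14 {K : Type*} [Field K] [LinearOrder K] [IsStrictOrderedRing K] (e T : K → K)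
    (hKT : IsOTF e T)
    (he : ∀ y : K, HasDerivAtOF e y (e y)) :
    (∀ (m : ℕ) (x : K), (m : K) ≤ x → x ≤ (m : K) + 1 →
      HasDerivAtOF T x (e (x - (m : K)) * ∏ i ∈ Finset.Icc 1 m, e (T (x - (i : K))))) ∧
    ∃ D : K → K,
      (∀ x : K, (∃ n : ℕ, |x| ≤ (n : K)) → HasDerivAtOF T x (D x)) ∧
      (∀ x : K, (∃ n : ℕ, |x| ≤ (n : K)) → ContinuousAtOF D x) := by
  classical
  constructor
  · intro m x h1 h2
    rw [formula_eq hKT m x h1 h2]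
    exact main_pos hKT he m x h1 h2
  · set D : K → K := fun x => if h : ∃ b, HasDerivAtOF T x b then h.choose else 0 with hDdef
    have hD : ∀ (y b : K), HasDerivAtOF T y b → D y = b := by
      intro y b hb
      have hex : ∃ b, HasDerivAtOF T y b := ⟨b, hb⟩
      calc D y = hex.choose := by simp only [hDdef]; exact dif_pos hex
        _ = b := derivOF_unique hex.choose_spec hb
    have hball : ∀ x : K, (∃ n : ℕ, |x| ≤ (n : K)) →
        ∃ m : ℕ, ((m:K) ≤ x ∧ x ≤ (m:K) + 1) ∨ (-((m:K)+1) ≤ x ∧ x ≤ -(m:K)) := by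
      rintro x ⟨n, hn⟩
      rcases le_or_gt 0 x with hx | hx
      · obtain ⟨m, hm⟩ := existsInterval n x hx (le_trans (le_abs_self x) hn)
        exact ⟨m, Or.inl hm⟩
      · obtain ⟨m, hm1, hm2⟩ := existsInterval n (-x) (by linarith)
          (le_trans (neg_le_abs x) hn)
        exact ⟨m, Or.inr ⟨by linarith, by linarith⟩⟩
    refine ⟨D, ?_, ?_⟩
    · intro x hx
      obtain ⟨m, hm | hm⟩ := hball x hx
      · have h := main_pos hKT he m x hm.1 hm.2
        rwa [hD x _ h]
      · have h := main_neg hKT he m x hm.1 hm.2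
        rwa [hD x _ h]
    · intro x hx
      obtain ⟨m, hm | hm⟩ := hball x hx
      · -- positive side
        rcases eq_or_lt_of_le hm.1 with heq | hlt
        · cases m with
          | zero =>
            rw [← heq]
            refine contOF_glue one_pos (cont_pos_formula he 0 ((0:ℕ):K) _)
              (cont_neg_formula hKT he 0 ((0:ℕ):K) _) ?_ ?_
            · intro y hy hxy
              rw [abs_lt] at hy
              refine hD y _ (main_pos hKT he 0 y hxy ?_)
              push_cast at hy ⊢; linarith [hy.2]
            · intro y hy hxy
              rw [abs_lt] at hy
              refine hD y _ (main_neg hKT he 0 y ?_ ?_)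
              · push_cast at hy ⊢; linarith [hy.1]
              · push_cast at hxy ⊢; linarith
          | succ k =>
            have hx0 : x = (((k+1):ℕ):K) := heq.symm
            rw [hx0]
            refine contOF_glue one_pos (cont_pos_formula he (k+1) (((k+1):ℕ):K) _)
              (cont_pos_formula he k ((k:ℕ):K) _) ?_ ?_
            · intro y hy hxy
              rw [abs_lt] at hy
              refine hD y _ (main_pos hKT he (k+1) y hxy ?_)
              push_cast at hy ⊢; linarith [hy.2]
            · intro y hy hxy
              rw [abs_lt] at hy
              refine hD y _ (main_pos hKT he k y ?_ ?_)
              · push_cast at hy ⊢; linarith [hy.1]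
              · push_cast at hxy ⊢; linarith
        · rcases eq_or_lt_of_le hm.2 with heq2 | hlt2
          · -- x = m + 1
            rw [heq2]
            refine contOF_glue one_pos (cont_pos_formula he (m+1) (((m+1):ℕ):K) _)
              (cont_pos_formula he m ((m:ℕ):K) _) ?_ ?_
            · intro y hy hxy
              rw [abs_lt] at hy
              refine hD y _ (main_pos hKT he (m+1) y ?_ ?_)
              · push_cast at hxy ⊢; linarith
              · push_cast at hy ⊢; linarith [hy.2]
            · intro y hy hxy
              rw [abs_lt] at hy
              refine hD y _ (main_pos hKT he m y ?_ ?_)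
              · push_cast at hy ⊢; linarith [hy.1]
              · push_cast at hxy ⊢; linarith
          · -- interior
            refine contOF_glue (lt_min (by linarith) (by linarith) :
                (0:K) < min (x - (m:K)) ((m:K) + 1 - x))
              (cont_pos_formula he m ((m:ℕ):K) _)
              (cont_pos_formula he m ((m:ℕ):K) _) ?_ ?_
            · intro y hy hxy
              rw [abs_lt] at hy
              have hm1 : min (x - (m:K)) ((m:K) + 1 - x) ≤ x - (m:K) := min_le_left _ _
              have hm2 : min (x - (m:K)) ((m:K) + 1 - x) ≤ (m:K) + 1 - x := min_le_right _ _
              exact hD y _ (main_pos hKT he m y (by linarith) (by linarith))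
            · intro y hy hxy
              rw [abs_lt] at hy
              have hm1 : min (x - (m:K)) ((m:K) + 1 - x) ≤ x - (m:K) := min_le_left _ _
              have hm2 : min (x - (m:K)) ((m:K) + 1 - x) ≤ (m:K) + 1 - x := min_le_right _ _
              exact hD y _ (main_pos hKT he m y (by linarith) (by linarith))
      · -- negative side
        rcases eq_or_lt_of_le hm.2 with heq | hlt
        · cases m with
          | zero =>
            have hx0 : x = ((0:ℕ):K) := by rw [heq]; simp
            rw [hx0]
            refine contOF_glue one_pos (cont_pos_formula he 0 ((0:ℕ):K) _)
              (cont_neg_formula hKT he 0 ((0:ℕ):K) _) ?_ ?_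
            · intro y hy hxy
              rw [abs_lt] at hy
              refine hD y _ (main_pos hKT he 0 y hxy ?_)
              push_cast at hy ⊢; linarith [hy.2]
            · intro y hy hxy
              rw [abs_lt] at hy
              refine hD y _ (main_neg hKT he 0 y ?_ ?_)
              · push_cast at hy ⊢; linarith [hy.1]
              · push_cast at hxy ⊢; linarith
          | succ k =>
            have hx0 : x = -(((k+1):ℕ):K) := heq
            rw [hx0]
            refine contOF_glue one_pos (cont_neg_formula hKT he k ((k:ℕ):K) _)
              (cont_neg_formula hKT he (k+1) (((k+1):ℕ):K) _) ?_ ?_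
            · intro y hy hxy
              rw [abs_lt] at hy
              refine hD y _ (main_neg hKT he k y ?_ ?_)
              · push_cast at hxy ⊢; linarith
              · push_cast at hy ⊢; linarith [hy.2]
            · intro y hy hxy
              rw [abs_lt] at hy
              refine hD y _ (main_neg hKT he (k+1) y ?_ ?_)
              · push_cast at hy ⊢; linarith [hy.1]
              · push_cast at hxy ⊢; linarith
        · rcases eq_or_lt_of_le hm.1 with heq1 | hlt1
          · -- x = -(m+1)
            rw [← heq1]
            refine contOF_glue one_pos (cont_neg_formula hKT he m ((m:ℕ):K) _)
              (cont_neg_formula hKT he (m+1) (((m+1):ℕ):K) _) ?_ ?_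
            · intro y hy hxy
              rw [abs_lt] at hy
              refine hD y _ (main_neg hKT he m y ?_ ?_)
              · push_cast at hxy ⊢; linarith
              · push_cast at hy ⊢; linarith [hy.2]
            · intro y hy hxy
              rw [abs_lt] at hy
              refine hD y _ (main_neg hKT he (m+1) y ?_ ?_)
              · push_cast at hy ⊢; linarith [hy.1]
              · push_cast at hxy ⊢; linarith
          · -- interior
            refine contOF_glue (lt_min (by linarith) (by linarith) :
                (0:K) < min (-(m:K) - x) (x + (m:K) + 1))
              (cont_neg_formula hKT he m ((m:ℕ):K) _)
              (cont_neg_formula hKT he m ((m:ℕ):K) _) ?_ ?_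
            · intro y hy hxy
              rw [abs_lt] at hy
              have hm1 : min (-(m:K) - x) (x + (m:K) + 1) ≤ -(m:K) - x := min_le_left _ _
              have hm2 : min (-(m:K) - x) (x + (m:K) + 1) ≤ x + (m:K) + 1 := min_le_right _ _
              exact hD y _ (main_neg hKT he m y (by linarith) (by linarith))
            · intro y hy hxy
              rw [abs_lt] at hy
              have hm1 : min (-(m:K) - x) (x + (m:K) + 1) ≤ -(m:K) - x := min_le_left _ _
              have hm2 : min (-(m:K) - x) (x + (m:K) + 1) ≤ x + (m:K) + 1 := min_le_right _ _
              exact hD y _ (main_neg hKT he m y (by linarith) (by linarith))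
end

section
/- Let (K,e,T) be a non-archimedean ordered transexponential field and L = T⁻¹. For every positive infinite a ∈ K and every n ∈ ℕ with n ≥ 2, one has n·L(a) > L(aⁿ), and consequently X_T(n·v(a)) = X_T(v(a)) where X_T(v(x)) := v(L(x)); that is, X_T is constant on archimedean classes of the value group: v_G(g) = v_G(h) implies X_T(g) = X_T(h) for g, h ∈ G^{<0}. -/
/-- `x` is a positive infinite element of `K` (equivalently, v(x) < 0, x > 0). -/
def PosInf {K : Type*} [Field K] [LinearOrder K] [IsStrictOrderedRing K] (x : K) : Prop :=
  ∀ n : ℕ, (n : K) < x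

/-- For positive x, y, `VEq x y` expresses v(x) = v(y) under the natural
valuation: x and y are multiplicatively archimedean equivalent. -/
def VEq {K : Type*} [Field K] [LinearOrder K] [IsStrictOrderedRing K] (x y : K) : Prop :=
  ∃ n : ℕ, x ≤ (n : K) * y ∧ y ≤ (n : K) * x

/-- For every positive infinite a and n ≥ 2 one has n·L(a) > L(aⁿ), hence
X_T(n·v(a)) = X_T(v(a)), i.e. v(L(aⁿ)) = v(L(a)); consequently X_T is constant
on archimedean classes of the value group: if v(a) and v(b) are archimedean
equivalent (∃ n k, a ≤ k·bⁿ and b ≤ k·aⁿ), then v(L(a)) = v(L(b)). -/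
theorem stmt_17 {K : Type*} [Field K] [LinearOrder K] [IsStrictOrderedRing K] (e T L : K → K)
    (hKT : IsOTF e T) (nonarch : ∃ z : K, PosInf z)
    (hL₁ : ∀ x : K, L (T x) = x) (hL₂ : ∀ y : K, 0 < y → T (L y) = y) :
    (∀ a : K, PosInf a → ∀ n : ℕ, 2 ≤ n →
      L (a ^ n) < (n : K) * L a ∧ VEq (L (a ^ n)) (L a)) ∧
    (∀ a b : K, PosInf a → PosInf b →
      (∃ n k : ℕ, a ≤ (k : K) * b ^ n ∧ b ≤ (k : K) * a ^ n) →
      VEq (L a) (L b)) := by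
  obtain ⟨hepos, hemono, headd, hesurj, heGA, heT1, hTpos, hTmono, hTsurj, hTe, hTsucc, hTneg⟩ := hKT
  have Lle : ∀ y y' : K, 0 < y → y ≤ y' → L y ≤ L y' := by
    intro y y' hy hyy
    have h := hTmono.le_iff_le (a := L y) (b := L y')
    rw [hL₂ y hy, hL₂ y' (lt_of_lt_of_le hy hyy)] at h
    exact h.mp hyy
  have he1 : e 1 < 3 := by
    have h := heT1 1 (by norm_num) (by norm_num)
    rw [abs_lt] at h
    have := h.2
    norm_num at this
    linarith
  have hLa1 : ∀ a : K, PosInf a → 1 < L a := by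
    intro a ha
    have h3 : (3 : K) < a := by exact_mod_cast ha 3
    have h0 : (0 : K) < a := by linarith
    have hT : T 1 < T (L a) := by
      rw [hL₂ a h0, hTe 1 zero_le_one le_rfl]
      linarith
    exact hTmono.lt_iff_lt.mp hT
  have main : ∀ a : K, PosInf a → ∀ n : ℕ, 2 ≤ n → L (a ^ n) < (n : K) * L a := by
    intro a ha n hn
    have h0 : (0 : K) < a := by exact_mod_cast ha 0
    have hL1 : 1 < L a := hLa1 a ha
    have hn2 : ((n : K)) ^ 2 ≤ a := by
      have := ha (n ^ 2)
      push_cast at this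
      linarith
    have hGA := heGA n a hn2
    have hsucc : T (L a + 1) = e a := by rw [hTsucc (L a) (by linarith), hL₂ a h0]
    have hnK : (2 : K) ≤ (n : K) := by exact_mod_cast hn
    have hlt : L a + 1 < (n : K) * L a := by nlinarith
    have hkey : a ^ n < T ((n : K) * L a) := by
      calc a ^ n < e a := hGA
        _ = T (L a + 1) := hsucc.symm
        _ < T ((n : K) * L a) := hTmono hlt
    have hpow : (0 : K) < a ^ n := pow_pos h0 n
    have hT : T (L (a ^ n)) < T ((n : K) * L a) := by rw [hL₂ _ hpow]; exact hkey
    exact hTmono.lt_iff_lt.mp hT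
  constructor
  · intro a ha n hn
    have h0 : (0 : K) < a := by exact_mod_cast ha 0
    have hL1 : 1 < L a := hLa1 a ha
    have hm := main a ha n hn
    refine ⟨hm, n, le_of_lt hm, ?_⟩
    have haan : a ≤ a ^ n := le_self_pow₀ (by
      have h1 : (1 : K) < a := by exact_mod_cast ha 1
      linarith) (by omega)
    have hLL : L a ≤ L (a ^ n) := Lle a (a ^ n) h0 haan
    have hnK : (2 : K) ≤ (n : K) := by exact_mod_cast hn
    nlinarith
  · rintro a b ha hb ⟨n, k, h1, h2⟩
    have h0a : (0 : K) < a := by exact_mod_cast ha 0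
    have h0b : (0 : K) < b := by exact_mod_cast hb 0
    have hkb : (k : K) < b := hb k
    have hka : (k : K) < a := ha k
    have hn1 : 1 ≤ n := by
      by_contra h
      have hn0 : n = 0 := by omega
      rw [hn0] at h1
      simp at h1
      linarith
    have hab : a ≤ b ^ (n + 1) := by
      calc a ≤ (k : K) * b ^ n := h1
        _ ≤ b * b ^ n := by
            apply mul_le_mul_of_nonneg_right (le_of_lt hkb) (le_of_lt (pow_pos h0b n))
        _ = b ^ (n + 1) := by ring
    have hba : b ≤ a ^ (n + 1) := by
      calc b ≤ (k : K) * a ^ n := h2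
        _ ≤ a * a ^ n := by
            apply mul_le_mul_of_nonneg_right (le_of_lt hka) (le_of_lt (pow_pos h0a n))
        _ = a ^ (n + 1) := by ring
    have hmb := main b hb (n + 1) (by omega)
    have hma := main a ha (n + 1) (by omega)
    refine ⟨n + 1, ?_, ?_⟩
    · have := Lle a (b ^ (n + 1)) h0a hab
      push_cast
      push_cast at hmb
      linarith
    · have := Lle b (a ^ (n + 1)) h0b hba
      push_cast
      push_cast at hma
      linarith
end
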